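/- arXiv:1211.1450 — 7 statements merged into one kernel-verified Lean document; each statement's English description precedes it below -/
import Mathlib

section
/- For n ∈ ℕ, let V_n := {q(z²) + c·z^{2n+1} : q ∈ ℂ[z], deg q ≤ 2n+1, c ∈ ℂ} ⊆ ℂ[z] and W_n := {P ∈ V_n : (z−1)^{2n+2} divides P}. Then the set 𝒩 := {n ∈ ℕ : W_n contains a polynomial P whose coefficient of z^{4n+2} and whose constant coefficient are both nonzero} is infinite. -/
open Polynomial Finset

noncomputable def Bc (s : ℂ) (k : ℕ) : ℂ := (∏ i ∈ Finset.range k, (s - i)) / (k.factorial : ℂ)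

lemma prod_cast (m k : ℕ) : (∏ i ∈ Finset.range k, ((m : ℂ) - i)) = (m.descFactorial k : ℂ) := by
  induction k with
  | zero => simp
  | succ k ih =>
    rw [Finset.prod_range_succ, ih, Nat.descFactorial_succ]
    rcases lt_trichotomy m k with h | h | h
    · have h0 : m.descFactorial k = 0 := Nat.descFactorial_eq_zero_iff_lt.2 h
      simp [h0]
    · subst h
      push_cast [Nat.sub_self]
      ring
    · push_cast [Nat.cast_sub h.le]
      ring

lemma Bc_natCast (m k : ℕ) : Bc m k = (m.choose k : ℂ) := by
  rw [Bc, prod_cast, Nat.descFactorial_eq_factorial_mul_choose]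
  have : (k.factorial : ℂ) ≠ 0 := Nat.cast_ne_zero.2 k.factorial_ne_zero
  field_simp
  exact Nat.cast_mul _ _

lemma Bc_pascal (s : ℂ) (k : ℕ) : Bc s (k+1) = Bc (s-1) k + Bc (s-1) (k+1) := by
  have hk : ((k.factorial : ℂ)) ≠ 0 := Nat.cast_ne_zero.2 k.factorial_ne_zero
  have hk2 : ((k : ℂ) + 1) ≠ 0 := Nat.cast_add_one_ne_zero k
  have hL : (∏ i ∈ Finset.range (k+1), (s - i)) = s * ∏ i ∈ Finset.range k, (s - 1 - i) := by
    rw [Finset.prod_range_succ']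
    have hc : ∀ x ∈ Finset.range k, (s - ((x:ℕ):ℂ)) = (s - x) := by intro x _; ring
    push_cast
    have hc2 : ∀ x ∈ Finset.range k, (s - ((x:ℂ) + 1)) = (s - 1 - x) := by intro x _; ring
    rw [Finset.prod_congr rfl hc2]
    ring
  have hR : (∏ i ∈ Finset.range (k+1), (s - 1 - i)) = (∏ i ∈ Finset.range k, (s - 1 - i)) * (s - 1 - k) := Finset.prod_range_succ _ _
  rw [Bc, Bc, Bc, hL, hR, Nat.factorial_succ]
  push_cast
  field_simp
  ring

lemma Bc_half_ne_zero (a : ℤ) (ha : Odd a) (k : ℕ) : Bc ((a:ℂ)/2) k ≠ 0 := by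
  apply div_ne_zero
  · rw [Finset.prod_ne_zero_iff]
    intro i _
    intro h
    have h2 : (a : ℂ) = 2 * i := by linear_combination 2 * h
    have h3 : a = 2 * (i : ℤ) := by exact_mod_cast h2
    exact (Int.not_odd_iff_even.2 ⟨i, by omega⟩) ha
  · exact Nat.cast_ne_zero.2 k.factorial_ne_zero

lemma natid (m j : ℕ) :
    ∑ k ∈ Finset.range (j+1), ((k.choose (j-k)) : ℂ) * 4^k * (m.choose k : ℂ)
      = 2^j * (((2*m).choose j : ℂ)) := by
  have e1 : ((1:ℂ[X]) + 2*X)^(2*m) = ∑ k ∈ Finset.range (2*m+1),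
      C ((2:ℂ)^k * ((2*m).choose k : ℂ)) * X^k := by
    rw [add_comm, add_pow]
    apply Finset.sum_congr rfl
    intro k _
    rw [one_pow, mul_one, mul_pow, map_mul, map_pow, Polynomial.C_eq_natCast, map_ofNat]
    norm_num
    ring
  have e2 : ((1:ℂ[X]) + 2*X)^(2*m) = ∑ k ∈ Finset.range (m+1),
      C ((4:ℂ)^k * (m.choose k : ℂ)) * ((X+1)^k * X^k) := by
    rw [pow_mul]
    have : ((1:ℂ[X]) + 2*X)^2 = 1 + (4*(X*(X+1))) := by ring
    rw [this, add_comm, add_pow]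
    apply Finset.sum_congr rfl
    intro k _
    rw [one_pow, mul_one, mul_pow, mul_pow, map_mul, map_pow, Polynomial.C_eq_natCast, map_ofNat]
    norm_num
    ring
  have hc1 : (((1:ℂ[X]) + 2*X)^(2*m)).coeff j = (2:ℂ)^j * ((2*m).choose j : ℂ) := by
    rw [e1, finset_sum_coeff]
    simp only [coeff_C_mul, coeff_X_pow, mul_ite, mul_one, mul_zero]
    rw [Finset.sum_ite_eq (Finset.range (2*m+1)) j]
    by_cases h : j ∈ Finset.range (2*m+1)
    · simp [h]
    · have : (2*m).choose j = 0 := Nat.choose_eq_zero_of_lt (by simpa using h)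
      simp [h, this]
  have hc2 : (((1:ℂ[X]) + 2*X)^(2*m)).coeff j
      = ∑ k ∈ Finset.range (m+1), if k ≤ j then ((4:ℂ)^k * (m.choose k : ℂ)) * ((k.choose (j-k)):ℂ) else 0 := by
    rw [e2, finset_sum_coeff]
    apply Finset.sum_congr rfl
    intro k _
    rw [mul_assoc, coeff_C_mul, coeff_mul_X_pow']
    by_cases h : k ≤ j
    · simp [h, coeff_X_add_one_pow, mul_assoc]
    · simp [h]
  have key : ∑ k ∈ Finset.range (m+1), (if k ≤ j then ((4:ℂ)^k * (m.choose k : ℂ)) * ((k.choose (j-k)):ℂ) else 0)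
      = ∑ k ∈ Finset.range (j+1), ((k.choose (j-k)) : ℂ) * 4^k * (m.choose k : ℂ) := by
    rw [Finset.sum_subset (Finset.range_subset_range.2 (by omega : m+1 ≤ m+j+1))]
    · rw [show (∑ k ∈ Finset.range (j+1), ((k.choose (j-k)) : ℂ) * 4^k * (m.choose k : ℂ))
          = ∑ k ∈ Finset.range (j+1), (if k ≤ j then ((4:ℂ)^k * (m.choose k : ℂ)) * ((k.choose (j-k)):ℂ) else 0) from
          Finset.sum_congr rfl (by intro k hk; rw [if_pos (by simpa using Nat.lt_succ_iff.1 (Finset.mem_range.1 hk))]; ring)]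
      rw [Finset.sum_subset (Finset.range_subset_range.2 (by omega : j+1 ≤ m+j+1))]
      intro x _ hx
      have hxj : ¬ (x ≤ j) := by simp at hx; omega
      rw [if_neg hxj]
    · intro x _ hx
      have : m.choose x = 0 := Nat.choose_eq_zero_of_lt (by simp at hx; omega)
      simp [this]
  rw [← key, ← hc2, hc1]

lemma keyid (j : ℕ) (s : ℂ) :
    ∑ k ∈ Finset.range (j+1), ((k.choose (j-k)) : ℂ) * 4^k * Bc s k = 2^j * Bc (2*s) j := by
  set p₁ : ℂ[X] := ∑ k ∈ Finset.range (j+1),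
    C (((k.choose (j-k)):ℂ) * 4^k * ((k.factorial:ℂ))⁻¹) * ∏ i ∈ Finset.range k, (X - C (i:ℂ)) with hp₁
  set p₂ : ℂ[X] := C ((2:ℂ)^j * ((j.factorial:ℂ))⁻¹) * ∏ i ∈ Finset.range j, (C 2 * X - C (i:ℂ)) with hp₂
  have he1 : ∀ x : ℂ, eval x p₁ = ∑ k ∈ Finset.range (j+1), ((k.choose (j-k)):ℂ) * 4^k * Bc x k := by
    intro x
    rw [hp₁, eval_finset_sum]
    apply Finset.sum_congr rfl
    intro k _
    rw [eval_mul, eval_C, eval_prod]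
    simp only [eval_sub, eval_X, eval_C]
    rw [Bc, div_eq_mul_inv]
    ring
  have he2 : ∀ x : ℂ, eval x p₂ = 2^j * Bc (2*x) j := by
    intro x
    rw [hp₂, eval_mul, eval_C, eval_prod]
    simp only [eval_sub, eval_mul, eval_X, eval_C]
    rw [Bc, div_eq_mul_inv]
    ring
  have hpq : p₁ = p₂ := by
    apply eq_of_infinite_eval_eq
    apply Set.infinite_of_injective_forall_mem (f := (Nat.cast : ℕ → ℂ)) Nat.cast_injective
    intro m
    show eval (m:ℂ) p₁ = eval (m:ℂ) p₂
    rw [he1, he2]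
    have : (2 : ℂ) * (m : ℂ) = ((2*m : ℕ) : ℂ) := by push_cast; ring
    rw [this, Bc_natCast]
    calc ∑ k ∈ Finset.range (j+1), ((k.choose (j-k)):ℂ) * 4^k * Bc (m:ℂ) k
        = ∑ k ∈ Finset.range (j+1), ((k.choose (j-k)):ℂ) * 4^k * ((m.choose k : ℕ):ℂ) := by
          apply Finset.sum_congr rfl; intro k _; rw [Bc_natCast]
      _ = 2^j * (((2*m).choose j : ℕ):ℂ) := natid m j
  calc ∑ k ∈ Finset.range (j+1), ((k.choose (j-k)):ℂ) * 4^k * Bc s k = eval s p₁ := (he1 s).symm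
    _ = eval s p₂ := by rw [hpq]
    _ = 2^j * Bc (2*s) j := he2 s

lemma Bc_alt (s : ℂ) (m : ℕ) :
    ∑ k ∈ Finset.range (m+1), (-1:ℂ)^k * Bc s k = (-1)^m * Bc (s-1) m := by
  induction m with
  | zero => simp [Bc]
  | succ m ih =>
    rw [Finset.sum_range_succ, ih, Bc_pascal s m]
    ring

lemma main_exists (n : ℕ) : ∃ P : ℂ[X],
    (∃ q : ℂ[X], q.natDegree ≤ 2 * n + 1 ∧ ∃ c : ℂ,
        P = q.comp (X ^ 2) + C c * X ^ (2 * n + 1)) ∧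
    (X - C 1) ^ (2 * n + 2) ∣ P ∧
    P.coeff (4 * n + 2) ≠ 0 ∧ P.coeff 0 ≠ 0 := by
  set s : ℂ := ((2*n+1 : ℕ) : ℂ) / 2 with hs
  set q : ℂ[X] := -∑ k ∈ Finset.range (2*n+2), C (Bc s k) * (X - C 1)^k with hq
  set P : ℂ[X] := q.comp (X ^ 2) + C 1 * X ^ (2 * n + 1) with hP
  have hdeg : q.natDegree ≤ 2 * n + 1 := by
    rw [hq, natDegree_neg]
    apply natDegree_sum_le_of_forall_le
    intro k hk
    refine le_trans (natDegree_C_mul_le _ _) ?_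
    rw [natDegree_pow, natDegree_X_sub_C, mul_one]
    exact Nat.lt_succ_iff.1 (Finset.mem_range.1 hk)
  -- divisibility
  set T : ℂ[X] := P.comp (X + C 1) with hT
  have hPT : P = T.comp (X - C 1) := by
    rw [hT, comp_assoc]
    have : (X + C 1 : ℂ[X]).comp (X - C 1) = X := by
      rw [add_comp, X_comp, C_comp]; ring
    rw [this, comp_X]
  have hTeq : T = -∑ k ∈ Finset.range (2*n+2), C (Bc s k) * ((X + C 2) * X)^k
      + C 1 * (X + C 1)^(2*n+1) := by
    rw [hT, hP, add_comp, mul_comp, C_comp, pow_comp, X_comp, comp_assoc, pow_comp, X_comp,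
      hq, neg_comp, Polynomial.sum_comp]
    congr 1
    congr 1
    apply Finset.sum_congr rfl
    intro k _
    rw [mul_comp, C_comp, pow_comp, sub_comp, X_comp, C_comp]
    congr 2
    simp only [C_1, map_ofNat]
    ring
  have h2s : (2:ℂ) * s = ((2*n+1 : ℕ) : ℂ) := by rw [hs]; ring
  have hdvdT : X ^ (2*n+2) ∣ T := by
    rw [X_pow_dvd_iff]
    intro d hd
    rw [hTeq, coeff_add, coeff_neg, finset_sum_coeff, coeff_C_mul, Polynomial.coeff_X_add_C_pow, one_pow, one_mul]
    have hterm : ∀ k ∈ Finset.range (2*n+2),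
        (C (Bc s k) * ((X + C 2) * X)^k).coeff d
          = if k ≤ d then Bc s k * (2^(k-(d-k)) * ((k.choose (d-k) : ℕ) : ℂ)) else 0 := by
      intro k _
      rw [coeff_C_mul, mul_pow, coeff_mul_X_pow', Polynomial.coeff_X_add_C_pow]
      by_cases h : k ≤ d
      · simp [h]
      · simp [h]
    rw [Finset.sum_congr rfl hterm]
    have hsub : Finset.range (d+1) ⊆ Finset.range (2*n+2) := Finset.range_subset_range.2 (by omega)
    rw [← Finset.sum_subset hsub (by
      intro x _ hx
      have : ¬ (x ≤ d) := by simp at hx ⊢; omega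
      rw [if_neg this])]
    have hdrop : ∀ k ∈ Finset.range (d+1),
        (if k ≤ d then Bc s k * (2^(k-(d-k)) * ((k.choose (d-k) : ℕ) : ℂ)) else 0)
          = Bc s k * (2^(k-(d-k)) * ((k.choose (d-k) : ℕ) : ℂ)) := by
      intro k hk
      rw [if_pos (Nat.lt_succ_iff.1 (Finset.mem_range.1 hk))]
    rw [Finset.sum_congr rfl hdrop]
    have hKey := keyid d s
    rw [h2s, Bc_natCast] at hKey
    have h2d : (2:ℂ)^d ≠ 0 := pow_ne_zero d two_ne_zero
    have hmul : (∑ k ∈ Finset.range (d+1), Bc s k * (2^(k-(d-k)) * ((k.choose (d-k) : ℕ) : ℂ))) * 2^d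
        = (((2*n+1).choose d : ℕ) : ℂ) * 2^d := by
      rw [Finset.sum_mul]
      have : ∀ k ∈ Finset.range (d+1),
          Bc s k * (2^(k-(d-k)) * ((k.choose (d-k) : ℕ) : ℂ)) * 2^d
            = ((k.choose (d-k) : ℕ) : ℂ) * 4^k * Bc s k := by
        intro k hk
        have hkd : k ≤ d := Nat.lt_succ_iff.1 (Finset.mem_range.1 hk)
        rcases le_or_gt (d - k) k with h | h
        · have he : (k - (d - k)) + d = 2 * k := by omega
          have : (2:ℂ)^(k-(d-k)) * 2^d = 4^k := by
            rw [← pow_add, he, pow_mul]; norm_num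
          calc Bc s k * (2^(k-(d-k)) * ((k.choose (d-k) : ℕ) : ℂ)) * 2^d
              = ((k.choose (d-k) : ℕ) : ℂ) * ((2:ℂ)^(k-(d-k)) * 2^d) * Bc s k := by ring
            _ = ((k.choose (d-k) : ℕ) : ℂ) * 4^k * Bc s k := by rw [this]
        · have : k.choose (d-k) = 0 := Nat.choose_eq_zero_of_lt h
          simp [this]
      rw [Finset.sum_congr rfl this, keyid d s, h2s, Bc_natCast]
      ring
    have := mul_right_cancel₀ h2d hmul
    rw [this]
    ring
  have hdvd : (X - C 1) ^ (2 * n + 2) ∣ P := by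
    obtain ⟨g, hg⟩ := hdvdT
    exact ⟨g.comp (X - C 1), by rw [hPT, hg, mul_comp, pow_comp, X_comp]⟩
  -- coefficient 4n+2
  have hq_top : q.coeff (2*n+1) = -(Bc s (2*n+1)) := by
    rw [hq, coeff_neg, finset_sum_coeff, neg_inj]
    rw [Finset.sum_eq_single (2*n+1)]
    · rw [coeff_C_mul]
      have : ((X - C 1 : ℂ[X])^(2*n+1)).coeff (2*n+1) = 1 := by
        have hm : ((X - C 1 : ℂ[X])^(2*n+1)).Monic := (monic_X_sub_C 1).pow _
        have hnd : ((X - C 1 : ℂ[X])^(2*n+1)).natDegree = 2*n+1 := by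
          rw [natDegree_pow, natDegree_X_sub_C, mul_one]
        have h3 := hm.coeff_natDegree
        rw [hnd] at h3; exact h3
      rw [this, mul_one]
    · intro k hk hne
      rw [coeff_C_mul]
      have hklt : k < 2*n+1 := by
        have := Finset.mem_range.1 hk; omega
      have : ((X - C 1 : ℂ[X])^k).coeff (2*n+1) = 0 := by
        apply coeff_eq_zero_of_natDegree_lt
        rw [natDegree_pow, natDegree_X_sub_C, mul_one]
        omega
      rw [this, mul_zero]
    · intro h
      exact absurd (Finset.mem_range.2 (by omega)) h
  have hsodd : Bc s (2*n+1) ≠ 0 := by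
    have : s = (((2*n+1 : ℤ)) : ℂ) / 2 := by rw [hs]; push_cast; ring
    rw [this]
    exact Bc_half_ne_zero (2*n+1) ⟨n, by ring⟩ _
  have hc42 : P.coeff (4 * n + 2) ≠ 0 := by
    rw [hP, coeff_add, coeff_C_mul, coeff_X_pow, if_neg (by omega : ¬ (4*n+2 = 2*n+1))]
    rw [mul_zero, add_zero]
    have : q.comp (X ^ 2) = Polynomial.expand ℂ 2 q := (Polynomial.expand_eq_comp_X_pow (R:=ℂ) 2).symm
    rw [this, Polynomial.coeff_expand (by norm_num : 0 < 2), if_pos (by omega : 2 ∣ 4*n+2)]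
    have : (4*n+2)/2 = 2*n+1 := by omega
    rw [this, hq_top]
    exact neg_ne_zero.2 hsodd
  -- coefficient 0
  have hc0 : P.coeff 0 ≠ 0 := by
    rw [coeff_zero_eq_eval_zero, hP, eval_add, eval_mul, eval_C, eval_pow, eval_X,
      zero_pow (by omega : 2*n+1 ≠ 0), eval_comp, eval_pow, eval_X]
    have h0 : (0:ℂ)^2 = 0 := by norm_num
    rw [h0, mul_zero, add_zero, hq, eval_neg, eval_finset_sum]
    have : ∀ k ∈ Finset.range (2*n+2),
        eval 0 (C (Bc s k) * (X - C 1)^k) = (-1:ℂ)^k * Bc s k := by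
      intro k _
      rw [eval_mul, eval_C, eval_pow, eval_sub, eval_X, eval_C]
      ring
    rw [Finset.sum_congr rfl this]
    have := Bc_alt s (2*n+1)
    rw [this]
    have hodd : (-1:ℂ)^(2*n+1) = -1 := Odd.neg_one_pow ⟨n, by ring⟩
    rw [hodd]
    simp only [neg_mul, neg_neg, one_mul]
    have : s - 1 = (((2*(n:ℤ)-1 : ℤ)) : ℂ) / 2 := by rw [hs]; push_cast; ring
    rw [this]
    exact Bc_half_ne_zero _ ⟨(n:ℤ)-1, by ring⟩ _
  exact ⟨P, ⟨q, hdeg, 1, rfl⟩, hdvd, hc42, hc0⟩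

/-- For `n ∈ ℕ`, let `V_n = {q(z²) + c·z^{2n+1} : deg q ≤ 2n+1, c ∈ ℂ}` and
`W_n = {P ∈ V_n : (z-1)^{2n+2} ∣ P}`.  The set of `n` such that `W_n` contains a
polynomial whose `z^{4n+2}`-coefficient and constant coefficient are both nonzero
is infinite. -/
theorem infinitely_many_n_with_good_polynomial :
    {n : ℕ | ∃ P : ℂ[X],
        (∃ q : ℂ[X], q.natDegree ≤ 2 * n + 1 ∧ ∃ c : ℂ,
            P = q.comp (X ^ 2) + C c * X ^ (2 * n + 1)) ∧
        (X - C 1) ^ (2 * n + 2) ∣ P ∧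
        P.coeff (4 * n + 2) ≠ 0 ∧ P.coeff 0 ≠ 0}.Infinite := by
  have h : {n : ℕ | ∃ P : ℂ[X],
        (∃ q : ℂ[X], q.natDegree ≤ 2 * n + 1 ∧ ∃ c : ℂ,
            P = q.comp (X ^ 2) + C c * X ^ (2 * n + 1)) ∧
        (X - C 1) ^ (2 * n + 2) ∣ P ∧
        P.coeff (4 * n + 2) ≠ 0 ∧ P.coeff 0 ≠ 0} = Set.univ :=
    Set.eq_univ_of_forall (fun n => main_exists n)
  rw [h]
  exact Set.infinite_univ
end

section
/- Let n ∈ ℕ, q ∈ ℂ[z] with deg q ≤ 2n+1, and c ∈ ℂ, and set P(z) := q(z²) + c·z^{2n+1}. Assume (z−1)^{2n+2} divides P, and that the constant coefficient of P and the coefficient of z^{4n+2} in P are both nonzero. Define F : ℂ² → ℂ by F(x,y) := Σ_{j=0}^{2n+1} (coeff of z^j in q)·x^j·y^{2n+1−j} + c·|xy|^{(2n+1)/2}. For p ∈ ℂ and t ∈ ℂ \ {0}, let e_t(p) := sSup{γ ≥ 0 : ∃ r > 0 with ∫_{B(p,r)} |F(x, t/x)|^{−2γ} dλ(x) < ∞},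 and let e₀ := min( sSup{γ ≥ 0 : ∃ r > 0 with ∫_{B(0,r)} |F(x,0)|^{−2γ} dλ(x) < ∞}, sSup{γ ≥ 0 : ∃ r > 0 with ∫_{B(0,r)} |F(0,y)|^{−2γ} dλ(y) < ∞} ). Then for every real s > 0, with t := s², one has e_t(s) ≤ 1/(2n+2) < 1/(2n+1) = e₀. -/
open MeasureTheory Polynomial
open scoped ENNReal

/-- The complex singularity exponent of a function `f : ℂ → ℂ` at a point `p`:
the supremum of the `γ ≥ 0` such that `|f|^{-2γ}` is integrable on some disc
around `p`. -/
noncomputable def cse (f : ℂ → ℂ) (p : ℂ) : ℝ :=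
  sSup {γ : ℝ | 0 ≤ γ ∧ ∃ r : ℝ, 0 < r ∧
    (∫⁻ z in Metric.ball p r, ENNReal.ofReal (‖f z‖ ^ (-(2 * γ)))) < ⊤}


/-- Divergence: `‖z-p‖^(-β)` has infinite integral on any disc when `β ≥ 2`. -/
lemma aux_div_top {β : ℝ} (hβ : 2 ≤ β) (p : ℂ) {r : ℝ} (hr : 0 < r) :
    ∫⁻ z in Metric.ball p r, ENNReal.ofReal (‖z - p‖ ^ (-β)) = ⊤ := by
  set f : ℂ → ℝ≥0∞ := fun z => ENNReal.ofReal (‖z - p‖ ^ (-β)) with hf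
  set A : ℕ → Set ℂ :=
    fun k => Metric.ball p (r * (1/2)^k) \ Metric.ball p (r * (1/2)^(k+1)) with hA
  have hb : ∀ k : ℕ, 0 < r * (1/2:ℝ)^k := fun k => by positivity
  have hble : ∀ k : ℕ, r * (1/2:ℝ)^k ≤ r := fun k => by
    exact mul_le_of_le_one_right hr.le (pow_le_one₀ (by norm_num) (by norm_num))
  have hAsub : ∀ k, A k ⊆ Metric.ball p r := fun k =>
    Set.diff_subset.trans (Metric.ball_subset_ball (hble k))
  have hAmeas : ∀ k, MeasurableSet (A k) :=
    fun k => measurableSet_ball.diff measurableSet_ball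
  have hdisj : Pairwise (Function.onFun Disjoint A) := by
    have key : ∀ k l : ℕ, k < l → Disjoint (A k) (A l) := by
      intro k l hkl
      refine Set.disjoint_left.2 fun z hzk hzl => ?_
      have h1 : r * (1/2:ℝ)^(k+1) ≤ dist z p :=
        not_lt.1 (fun h => hzk.2 (Metric.mem_ball.2 h))
      have h2 : dist z p < r * (1/2:ℝ)^l := Metric.mem_ball.1 hzl.1
      have h3 : r * (1/2:ℝ)^l ≤ r * (1/2:ℝ)^(k+1) :=
        mul_le_mul_of_nonneg_left
          (pow_le_pow_of_le_one (by norm_num) (by norm_num) (by omega)) hr.le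
      linarith
    intro k l hkl
    rcases lt_or_gt_of_ne hkl with h | h
    · exact key _ _ h
    · exact (key _ _ h).symm
  have hlow : ∀ k : ℕ,
      ENNReal.ofReal (r ^ (2 - β) / 64) * (NNReal.pi : ℝ≥0∞) ≤ ∫⁻ z in A k, f z := by
    intro k
    set b := r * (1/2:ℝ)^k with hbdef
    have hb0 : 0 < b := hb k
    have hsucc : r * (1/2:ℝ)^(k+1) = b/2 := by rw [pow_succ]; ring
    have hball : Metric.ball (p + ((3*b/4 : ℝ) : ℂ)) (b/8) ⊆ A k := by
      intro z hz
      rw [Metric.mem_ball, dist_eq_norm] at hz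
      have hz' : ‖z - p - ((3*b/4:ℝ):ℂ)‖ < b/8 := by
        rw [sub_sub]; simpa using hz
      have hnorm : ‖(((3*b/4:ℝ)):ℂ)‖ = 3*b/4 := by
        rw [Complex.norm_real, Real.norm_of_nonneg (by linarith)]
      have hub : ‖z - p‖ < b := by
        have h := norm_add_le (z - p - ((3*b/4:ℝ):ℂ)) ((3*b/4:ℝ):ℂ)
        rw [sub_add_cancel] at h
        rw [hnorm] at h
        linarith
      have hlb : b/2 ≤ ‖z - p‖ := by
        have h : ‖((3*b/4:ℝ):ℂ)‖ ≤ ‖z - p‖ + ‖(z - p) - ((3*b/4:ℝ):ℂ)‖ := by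
          have := norm_sub_le (z - p) ((z - p) - ((3*b/4:ℝ):ℂ))
          simpa using this
        rw [hnorm] at h
        linarith
      constructor
      · rw [Metric.mem_ball, dist_eq_norm]; exact hub
      · rw [Metric.mem_ball, dist_eq_norm, hsucc]
        intro hcon
        linarith
    have hmeas_ge : ENNReal.ofReal (b/8)^2 * (NNReal.pi:ℝ≥0∞) ≤ volume (A k) := by
      rw [← Complex.volume_ball (p + ((3*b/4:ℝ):ℂ)) (b/8)]
      exact measure_mono hball
    have hpt : ∀ z ∈ A k, ENNReal.ofReal (b ^ (-β)) ≤ f z := by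
      intro z hz
      have h2 : ‖z - p‖ ≤ b := by
        have := Metric.mem_ball.1 hz.1
        rw [dist_eq_norm] at this
        exact this.le
      have h1 : b/2 ≤ ‖z - p‖ := by
        have := hz.2
        rw [Metric.mem_ball, dist_eq_norm, hsucc] at this
        linarith [not_lt.1 this]
      exact ENNReal.ofReal_le_ofReal
        (Real.rpow_le_rpow_of_nonpos (by linarith) h2 (by linarith))
    calc ENNReal.ofReal (r^(2-β)/64) * (NNReal.pi:ℝ≥0∞)
        ≤ ENNReal.ofReal (b^(-β)) * (ENNReal.ofReal (b/8)^2 * (NNReal.pi:ℝ≥0∞)) := by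
          rw [← mul_assoc, ← ENNReal.ofReal_pow (by linarith), ← ENNReal.ofReal_mul (by positivity)]
          gcongr
          have h2 : b^(-β) * b^((2:ℕ):ℝ) = b^(2-β) := by
            rw [← Real.rpow_add hb0]
            norm_num
            ring_nf
          have hbb : b^(-β) * (b/8)^2 = b^(2-β)/64 := by
            rw [div_pow, ← Real.rpow_natCast b 2,
              show ((8:ℝ))^2 = 64 by norm_num, mul_div_assoc', h2]
          rw [hbb]
          have := Real.rpow_le_rpow_of_nonpos hb0 (hble k) (by linarith : 2 - β ≤ 0)
          exact div_le_div_of_nonneg_right this (by norm_num)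
      _ ≤ ENNReal.ofReal (b^(-β)) * volume (A k) := by gcongr
      _ = ∫⁻ _ in A k, ENNReal.ofReal (b^(-β)) := (setLIntegral_const _ _).symm
      _ ≤ ∫⁻ z in A k, f z := setLIntegral_mono' (hAmeas k) hpt
  have hne : ENNReal.ofReal (r ^ (2 - β) / 64) * (NNReal.pi : ℝ≥0∞) ≠ 0 := by
    apply mul_ne_zero
    · exact (ENNReal.ofReal_pos.2 (by positivity)).ne'
    · exact ENNReal.coe_ne_zero.2 NNReal.pi_ne_zero
  refine top_le_iff.1 ?_
  calc (⊤:ℝ≥0∞) = ∑' _ : ℕ, ENNReal.ofReal (r^(2-β)/64) * (NNReal.pi:ℝ≥0∞) :=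
        (ENNReal.tsum_const_eq_top_of_ne_zero hne).symm
    _ ≤ ∑' k, ∫⁻ z in A k, f z := ENNReal.tsum_le_tsum hlow
    _ = ∫⁻ z in ⋃ k, A k, f z := (lintegral_iUnion hAmeas hdisj f).symm
    _ ≤ ∫⁻ z in Metric.ball p r, f z := lintegral_mono_set (Set.iUnion_subset hAsub)


/-- Convergence: `‖z‖^(-β)` is integrable near 0 when `β < 2`. -/
lemma aux_fin {β : ℝ} (hβ : β < 2) :
    ∫⁻ z in Metric.ball (0:ℂ) 1, ENNReal.ofReal (‖z‖ ^ (-β)) < ⊤ := by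
  rcases le_or_gt β 0 with hβ0 | hβ0
  · have hle : ∫⁻ z in Metric.ball (0:ℂ) 1, ENNReal.ofReal (‖z‖ ^ (-β))
        ≤ ∫⁻ _ in Metric.ball (0:ℂ) 1, 1 := by
      refine setLIntegral_mono' measurableSet_ball fun z hz => ?_
      rw [Metric.mem_ball, dist_zero_right] at hz
      exact ENNReal.ofReal_le_one.2 (Real.rpow_le_one (norm_nonneg z) hz.le (by linarith))
    refine lt_of_le_of_lt hle ?_
    rw [setLIntegral_one]
    exact measure_ball_lt_top
  · set A : ℕ → Set ℂ :=
      fun k => Metric.ball (0:ℂ) ((1/2:ℝ)^k) \ Metric.ball 0 ((1/2:ℝ)^(k+1)) with hA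
    have hcover : Metric.ball (0:ℂ) 1 ⊆ {0} ∪ ⋃ k, A k := by
      intro z hz
      rcases eq_or_ne z 0 with rfl | hz0
      · exact Or.inl rfl
      right
      rw [Metric.mem_ball, dist_zero_right] at hz
      have hzpos : 0 < ‖z‖ := norm_pos_iff.2 hz0
      have hex : ∃ k : ℕ, (1/2:ℝ)^(k+1) ≤ ‖z‖ := by
        obtain ⟨m, hm⟩ := exists_pow_lt_of_lt_one hzpos (by norm_num : (1/2:ℝ) < 1)
        exact ⟨m, le_of_lt (lt_of_le_of_lt
          (pow_le_pow_of_le_one (by norm_num) (by norm_num) (by omega)) hm)⟩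
      classical
      refine Set.mem_iUnion.2 ⟨Nat.find hex, ?_, ?_⟩
      · rw [Metric.mem_ball, dist_zero_right]
        rcases Nat.eq_zero_or_pos (Nat.find hex) with h0 | h0
        · rw [h0]; simpa using hz
        · have hmin := Nat.find_min hex (m := Nat.find hex - 1) (by omega)
          have hk1 : Nat.find hex - 1 + 1 = Nat.find hex := by omega
          rw [hk1] at hmin
          linarith [not_le.1 hmin]
      · intro hmem
        rw [Metric.mem_ball, dist_zero_right] at hmem
        exact absurd (Nat.find_spec hex) (not_le.2 hmem)
    have hppow : ∀ (m : ℕ) (y : ℝ), ((1/2:ℝ)^m)^y = ((1/2:ℝ)^y)^m := by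
      intro m y
      rw [← Real.rpow_natCast (1/2:ℝ) m, ← Real.rpow_mul (by norm_num), mul_comm,
        Real.rpow_mul (by norm_num), Real.rpow_natCast]
    have hbound : ∀ k : ℕ, ∫⁻ z in A k, ENNReal.ofReal (‖z‖ ^ (-β))
        ≤ (ENNReal.ofReal ((1/2:ℝ)^(-β)) * (NNReal.pi:ℝ≥0∞))
            * ENNReal.ofReal ((1/2:ℝ)^(2-β)) ^ k := by
      intro k
      have hpt : ∀ z ∈ A k, ENNReal.ofReal (‖z‖ ^ (-β))
          ≤ ENNReal.ofReal (((1/2:ℝ)^(k+1)) ^ (-β)) := by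
        intro z hz
        have h1 : (1/2:ℝ)^(k+1) ≤ ‖z‖ := by
          have := hz.2
          rw [Metric.mem_ball, dist_zero_right] at this
          exact not_lt.1 this
        exact ENNReal.ofReal_le_ofReal
          (Real.rpow_le_rpow_of_nonpos (by positivity) h1 (by linarith))
      calc ∫⁻ z in A k, ENNReal.ofReal (‖z‖ ^ (-β))
          ≤ ∫⁻ _ in A k, ENNReal.ofReal (((1/2:ℝ)^(k+1)) ^ (-β)) :=
            setLIntegral_mono' (measurableSet_ball.diff measurableSet_ball) hpt
        _ = ENNReal.ofReal (((1/2:ℝ)^(k+1)) ^ (-β)) * volume (A k) := setLIntegral_const _ _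
        _ ≤ ENNReal.ofReal (((1/2:ℝ)^(k+1)) ^ (-β))
              * (ENNReal.ofReal ((1/2:ℝ)^k) ^ 2 * (NNReal.pi:ℝ≥0∞)) := by
            gcongr
            rw [← Complex.volume_ball (0:ℂ) ((1/2:ℝ)^k)]
            exact measure_mono Set.diff_subset
        _ = (ENNReal.ofReal ((1/2:ℝ)^(-β)) * (NNReal.pi:ℝ≥0∞))
              * ENNReal.ofReal ((1/2:ℝ)^(2-β)) ^ k := by
            rw [← ENNReal.ofReal_pow (by positivity), ← ENNReal.ofReal_pow (by positivity),
              ← mul_assoc, ← ENNReal.ofReal_mul (by positivity),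
              mul_right_comm (ENNReal.ofReal _) (NNReal.pi:ℝ≥0∞),
              ← ENNReal.ofReal_mul (by positivity)]
            congr 2
            have hx : (1/2:ℝ)^(-β) * (1/2:ℝ)^(2:ℕ) = (1/2:ℝ)^(2-β) := by
              rw [← Real.rpow_natCast (1/2:ℝ) 2, ← Real.rpow_add (by norm_num)]
              norm_num
              ring_nf
            rw [hppow (k+1) (-β), pow_succ, pow_right_comm ((1:ℝ)/2) k 2, ← hx, mul_pow]
            ring
    have hsum : ∫⁻ z in Metric.ball (0:ℂ) 1, ENNReal.ofReal (‖z‖ ^ (-β))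
        ≤ ∑' k, ∫⁻ z in A k, ENNReal.ofReal (‖z‖ ^ (-β)) := by
      calc ∫⁻ z in Metric.ball (0:ℂ) 1, ENNReal.ofReal (‖z‖ ^ (-β))
          ≤ ∫⁻ z in ({0} : Set ℂ) ∪ ⋃ k, A k, ENNReal.ofReal (‖z‖ ^ (-β)) :=
            lintegral_mono_set hcover
        _ ≤ (∫⁻ z in ({0} : Set ℂ), ENNReal.ofReal (‖z‖ ^ (-β)))
              + ∫⁻ z in ⋃ k, A k, ENNReal.ofReal (‖z‖ ^ (-β)) := lintegral_union_le _ _ _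
        _ = ∫⁻ z in ⋃ k, A k, ENNReal.ofReal (‖z‖ ^ (-β)) := by
            rw [setLIntegral_measure_zero _ _ (measure_singleton 0), zero_add]
        _ ≤ ∑' k, ∫⁻ z in A k, ENNReal.ofReal (‖z‖ ^ (-β)) := lintegral_iUnion_le _ _
    have hρ : ENNReal.ofReal ((1/2:ℝ)^(2-β)) < 1 :=
      ENNReal.ofReal_lt_one.2 (Real.rpow_lt_one (by norm_num) (by norm_num) (by linarith))
    calc ∫⁻ z in Metric.ball (0:ℂ) 1, ENNReal.ofReal (‖z‖ ^ (-β))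
        ≤ ∑' k, ∫⁻ z in A k, ENNReal.ofReal (‖z‖ ^ (-β)) := hsum
      _ ≤ ∑' k : ℕ, (ENNReal.ofReal ((1/2:ℝ)^(-β)) * (NNReal.pi:ℝ≥0∞))
            * ENNReal.ofReal ((1/2:ℝ)^(2-β)) ^ k := ENNReal.tsum_le_tsum hbound
      _ = (ENNReal.ofReal ((1/2:ℝ)^(-β)) * (NNReal.pi:ℝ≥0∞))
            * (1 - ENNReal.ofReal ((1/2:ℝ)^(2-β)))⁻¹ := by
          rw [ENNReal.tsum_mul_left, ENNReal.tsum_geometric]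
      _ < ⊤ := by
          apply ENNReal.mul_lt_top
          · exact ENNReal.mul_lt_top ENNReal.ofReal_lt_top ENNReal.coe_lt_top
          · exact ENNReal.inv_lt_top.2 (tsub_pos_of_lt hρ)

lemma aux_split (a : ℂ) (m : ℕ) (γ : ℝ) (z : ℂ) :
    ENNReal.ofReal (‖a * z ^ m‖ ^ (-(2 * γ))) =
      ENNReal.ofReal (‖a‖ ^ (-(2 * γ))) * ENNReal.ofReal (‖z‖ ^ (-((m:ℝ) * (2 * γ)))) := by
  rw [← ENNReal.ofReal_mul (by positivity)]
  congr 1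
  rw [norm_mul, norm_pow, Real.mul_rpow (norm_nonneg a) (by positivity),
    ← Real.rpow_natCast ‖z‖ m, ← Real.rpow_mul (norm_nonneg z)]
  congr 1
  ring

lemma cse_monomial {a : ℂ} (ha : a ≠ 0) {m : ℕ} (hm : 0 < m) :
    cse (fun z => a * z ^ m) 0 = 1 / m := by
  have hm' : (0:ℝ) < m := by exact_mod_cast hm
  have hset : {γ : ℝ | 0 ≤ γ ∧ ∃ r : ℝ, 0 < r ∧
      (∫⁻ z in Metric.ball (0:ℂ) r,
        ENNReal.ofReal (‖(fun z : ℂ => a * z ^ m) z‖ ^ (-(2 * γ)))) < ⊤}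
      = Set.Ico (0:ℝ) (1/m) := by
    ext γ
    simp only [Set.mem_setOf_eq, Set.mem_Ico]
    constructor
    · rintro ⟨hγ0, r, hr, hfin⟩
      refine ⟨hγ0, ?_⟩
      by_contra hlt
      push_neg at hlt
      apply hfin.ne
      simp_rw [aux_split a m γ]
      rw [lintegral_const_mul' _ _ ENNReal.ofReal_ne_top]
      have hβ : 2 ≤ (m:ℝ) * (2 * γ) := by
        rw [div_le_iff₀ hm'] at hlt
        nlinarith
      have hdiv := aux_div_top hβ (0:ℂ) hr
      simp_rw [sub_zero] at hdiv
      rw [hdiv]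
      rw [ENNReal.mul_top (ENNReal.ofReal_pos.2 (Real.rpow_pos_of_pos (norm_pos_iff.2 ha) _)).ne']
    · rintro ⟨hγ0, hγ⟩
      refine ⟨hγ0, 1, one_pos, ?_⟩
      simp_rw [aux_split a m γ]
      rw [lintegral_const_mul' _ _ ENNReal.ofReal_ne_top]
      have hβ : (m:ℝ) * (2 * γ) < 2 := by
        rw [lt_div_iff₀ hm'] at hγ
        nlinarith
      exact ENNReal.mul_lt_top ENNReal.ofReal_lt_top (aux_fin hβ)
  unfold cse
  rw [hset, csSup_Ico (by positivity)]

/-- The counterexample family: if `P(z) = q(z²) + c·z^{2n+1}` is divisible by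
`(z-1)^{2n+2}` and has nonzero constant and `z^{4n+2}`-coefficients, then for
`F(x,y) = Σ_j (coeff of z^j in q)·x^j·y^{2n+1-j} + c·|xy|^{(2n+1)/2}` and every
`s > 0`, `t = s²`, the complex singularity exponent of `f_t = F|_{X_t}` at
`(s, s)` is at most `1/(2n+2) < 1/(2n+1)`, while that of `f₀ = F|_{X₀}` at the
origin equals `1/(2n+1)`. -/
theorem cse_counterexample_family (n : ℕ) (q : ℂ[X]) (hq : q.natDegree ≤ 2 * n + 1)
    (c : ℂ)
    (hdvd : (X - C 1) ^ (2 * n + 2) ∣ (q.comp (X ^ 2) + C c * X ^ (2 * n + 1)))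
    (hcoeff0 : (q.comp (X ^ 2) + C c * X ^ (2 * n + 1)).coeff 0 ≠ 0)
    (hcoefftop : (q.comp (X ^ 2) + C c * X ^ (2 * n + 1)).coeff (4 * n + 2) ≠ 0)
    (F : ℂ → ℂ → ℂ)
    (hF : ∀ x y : ℂ,
      F x y = (∑ j ∈ Finset.range (2 * n + 2), q.coeff j * x ^ j * y ^ (2 * n + 1 - j))
        + c * ((‖x * y‖ ^ ((2 * (n : ℝ) + 1) / 2) : ℝ) : ℂ)) :
    ∀ s : ℝ, 0 < s →
      cse (fun x : ℂ => F x ((s : ℂ) ^ 2 / x)) (s : ℂ) ≤ 1 / (2 * (n : ℝ) + 2) ∧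
      1 / (2 * (n : ℝ) + 2) < 1 / (2 * (n : ℝ) + 1) ∧
      min (cse (fun x : ℂ => F x 0) 0) (cse (fun y : ℂ => F 0 y) 0)
        = 1 / (2 * (n : ℝ) + 1) := by
  intro s hs
  set P : ℂ[X] := q.comp (X ^ 2) + C c * X ^ (2 * n + 1) with hPdef
  have hs0 : (s:ℂ) ≠ 0 := Complex.ofReal_ne_zero.2 hs.ne'
  have hPeval : ∀ w : ℂ, P.eval w
      = (∑ j ∈ Finset.range (2*n+2), q.coeff j * w^(2*j)) + c * w^(2*n+1) := by
    intro w
    rw [hPdef, Polynomial.eval_add, Polynomial.eval_mul, Polynomial.eval_pow,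
      Polynomial.eval_C, Polynomial.eval_X, Polynomial.eval_comp, Polynomial.eval_pow,
      Polynomial.eval_X]
    congr 1
    rw [Polynomial.eval_eq_sum_range' (show q.natDegree < 2*n+2 by omega)]
    exact Finset.sum_congr rfl fun j _ => by rw [← pow_mul]
  have hc0 : q.coeff 0 ≠ 0 := by
    intro h
    apply hcoeff0
    rw [Polynomial.coeff_zero_eq_eval_zero, hPeval 0,
      zero_pow (by omega : 2*n+1 ≠ 0), mul_zero, add_zero, Finset.sum_eq_single 0]
    · rw [h, zero_mul]
    · intro j _ hj
      rw [zero_pow (by omega : 2*j ≠ 0), mul_zero]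
    · intro hmem
      exact absurd (Finset.mem_range.2 (by omega)) hmem
  have hctop : q.coeff (2*n+1) ≠ 0 := by
    intro h
    apply hcoefftop
    have hcomp : q.comp (X^2 : ℂ[X]) = ∑ i ∈ Finset.range (2*n+2), C (q.coeff i) * (X^2)^i := by
      have h0 : q.comp (X^2 : ℂ[X]) = q.eval₂ C (X^2) := rfl
      rw [h0, Polynomial.eval₂_eq_sum_range' C (show q.natDegree < 2*n+2 by omega)]
    have hterm : ∀ i ∈ Finset.range (2*n+2), ((C (q.coeff i) * (X^2 : ℂ[X])^i).coeff (4*n+2))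
        = if i = 2*n+1 then q.coeff i else 0 := by
      intro i _
      rw [← pow_mul, Polynomial.coeff_C_mul, Polynomial.coeff_X_pow]
      by_cases hcase : i = 2*n+1
      · rw [if_pos (by omega), if_pos hcase, mul_one]
      · rw [if_neg (by omega), if_neg hcase, mul_zero]
    rw [hPdef, Polynomial.coeff_add, hcomp, Polynomial.finset_sum_coeff,
      Finset.sum_congr rfl hterm, Finset.sum_ite_eq' (Finset.range (2*n+2)) (2*n+1),
      if_pos (Finset.mem_range.2 (by omega)), Polynomial.coeff_C_mul,
      Polynomial.coeff_X_pow, if_neg (by omega), mul_zero, add_zero]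
    exact h
  have haxisx : (fun x : ℂ => F x 0) = fun x : ℂ => q.coeff (2*n+1) * x^(2*n+1) := by
    funext x
    rw [hF]
    have h1 : ‖x * 0‖ = (0:ℝ) := by simp
    rw [h1, Real.zero_rpow (by positivity : (0:ℝ) < (2*(n:ℝ)+1)/2).ne',
      Complex.ofReal_zero, mul_zero, add_zero, Finset.sum_eq_single (2*n+1)]
    · rw [Nat.sub_self, pow_zero, mul_one]
    · intro j hj hne
      rw [Finset.mem_range] at hj
      rw [zero_pow (by omega : 2*n+1-j ≠ 0), mul_zero]
    · intro hmem
      exact absurd (Finset.mem_range.2 (by omega)) hmem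
  have haxisy : (fun y : ℂ => F 0 y) = fun y : ℂ => q.coeff 0 * y^(2*n+1) := by
    funext y
    rw [hF]
    have h1 : ‖(0:ℂ) * y‖ = (0:ℝ) := by simp
    rw [h1, Real.zero_rpow (by positivity : (0:ℝ) < (2*(n:ℝ)+1)/2).ne',
      Complex.ofReal_zero, mul_zero, add_zero, Finset.sum_eq_single 0]
    · rw [pow_zero, mul_one, Nat.sub_zero]
    · intro j _ hj
      rw [zero_pow hj, mul_zero, zero_mul]
    · intro hmem
      exact absurd (Finset.mem_range.2 (by omega)) hmem
  have hpart2 : 1 / (2*(n:ℝ)+2) < 1 / (2*(n:ℝ)+1) :=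
    one_div_lt_one_div_of_lt (by positivity) (by linarith)
  have hmonox : cse (fun x : ℂ => F x 0) 0 = 1/(2*(n:ℝ)+1) := by
    rw [haxisx, cse_monomial hctop (show 0 < 2*n+1 by omega)]
    push_cast
    ring
  have hmonoy : cse (fun y : ℂ => F 0 y) 0 = 1/(2*(n:ℝ)+1) := by
    rw [haxisy, cse_monomial hc0 (show 0 < 2*n+1 by omega)]
    push_cast
    ring
  -- part 1
  have hP0 : P ≠ 0 := by
    intro h
    rw [h] at hcoeff0
    simp at hcoeff0
  obtain ⟨Q, hQ⟩ := hdvd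
  have hPfac : ∀ w : ℂ, P.eval w = (w - 1)^(2*n+2) * Q.eval w := by
    intro w
    rw [hQ]
    simp
  have habs : ∀ x : ℂ, x ≠ 0 →
      ((‖x * ((s:ℂ)^2/x)‖ ^ ((2*(n:ℝ)+1)/2) : ℝ) : ℂ) = (s:ℂ)^(2*n+1) := by
    intro x hx
    have h1 : x * ((s:ℂ)^2/x) = (s:ℂ)^2 := by field_simp
    have h2 : ‖((s:ℂ))^2‖ = s^2 := by
      rw [norm_pow, Complex.norm_real, Real.norm_of_nonneg hs.le]
    have h3 : (s^2:ℝ) ^ ((2*(n:ℝ)+1)/2) = s^(2*n+1) := by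
      rw [← Real.rpow_natCast s 2, ← Real.rpow_mul hs.le,
        show (((2:ℕ):ℝ)) * ((2*(n:ℝ)+1)/2) = ((2*n+1 : ℕ):ℝ) by push_cast; ring,
        Real.rpow_natCast]
    rw [h1, h2, h3]
    push_cast
    ring
  have hfib : ∀ x : ℂ, x ≠ 0 →
      F x ((s:ℂ)^2/x) = (s:ℂ)^(4*n+2) * P.eval (x/(s:ℂ)) / x^(2*n+1) := by
    intro x hx
    rw [hF, habs x hx, hPeval, eq_div_iff (pow_ne_zero _ hx), add_mul, mul_add]
    congr 1
    · rw [Finset.sum_mul, Finset.mul_sum]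
      refine Finset.sum_congr rfl fun j hj => ?_
      rw [Finset.mem_range] at hj
      set k := 2*n+1-j with hkdef
      have hk : j + k = 2*n+1 := by omega
      rw [show 4*n+2 = 2*j + 2*k by omega, ← hk]
      field_simp
      have h1 : x^k * x⁻¹^k = 1 := by rw [← mul_pow, mul_inv_cancel₀ hx, one_pow]
      have h2 : (s:ℂ)^(j*2) * (s:ℂ)⁻¹^(j*2) = 1 := by rw [← mul_pow, mul_inv_cancel₀ hs0, one_pow]
      linear_combination (q.coeff j * x^(j*2) * (s:ℂ)^(k*2)) * (h1 - h2)
    · field_simp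
      have hu : (s:ℂ) * (s:ℂ)⁻¹ = 1 := mul_inv_cancel₀ hs0
      have hv : (s:ℂ)^(n*2) * (s:ℂ)⁻¹^(n*2) = 1 := by rw [← mul_pow, mul_inv_cancel₀ hs0, one_pow]
      linear_combination (-(c * (s:ℂ) * (s:ℂ)^(n*2) * x * x^(n*2) * ((s:ℂ)^(n*2) * (s:ℂ)⁻¹^(n*2)))) * hu
        - (c * (s:ℂ) * (s:ℂ)^(n*2) * x * x^(n*2)) * hv
  obtain ⟨M, hM⟩ := (isCompact_closedBall (1:ℂ) (1/2)).exists_bound_of_continuousOn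
    (Q.continuousOn)
  have hM0 : 0 ≤ M := le_trans (norm_nonneg _) (hM 1 (Metric.mem_closedBall_self (by norm_num)))
  set K := (M+1) * 2^(2*n+1) / s with hKdef
  have hK0 : 0 < K := div_pos (mul_pos (by linarith) (by positivity)) hs
  have hbound : ∀ x ∈ Metric.ball ((s:ℝ):ℂ) (s/2),
      ‖F x ((s:ℂ)^2/x)‖ ≤ K * ‖x - (s:ℂ)‖^(2*n+2) := by
    intro x hx
    rw [Metric.mem_ball, dist_eq_norm] at hx
    have hxlb : s/2 < ‖x‖ := by
      have h : ‖(s:ℂ)‖ ≤ ‖x‖ + ‖x - (s:ℂ)‖ := by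
        calc ‖(s:ℂ)‖ = ‖x - (x - (s:ℂ))‖ := by ring_nf
          _ ≤ ‖x‖ + ‖x - (s:ℂ)‖ := norm_sub_le _ _
      rw [Complex.norm_real, Real.norm_of_nonneg hs.le] at h
      linarith
    have hx0 : x ≠ 0 := by
      intro h
      rw [h, norm_zero] at hxlb
      linarith
    have he : x/(s:ℂ) - 1 = (x - (s:ℂ))/(s:ℂ) := by field_simp
    have hw : x/(s:ℂ) ∈ Metric.closedBall (1:ℂ) (1/2) := by
      rw [Metric.mem_closedBall, dist_eq_norm, he, norm_div, Complex.norm_real,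
        Real.norm_of_nonneg hs.le, div_le_iff₀ hs]
      linarith
    have hQb : ‖Q.eval (x/(s:ℂ))‖ ≤ M + 1 := by linarith [hM _ hw]
    have hfx : ‖F x ((s:ℂ)^2/x)‖
        = s^(4*n+2) * (‖x - (s:ℂ)‖/s)^(2*n+2) * ‖Q.eval (x/(s:ℂ))‖ / ‖x‖^(2*n+1) := by
      rw [hfib x hx0, hPfac, norm_div, norm_mul, norm_mul, norm_pow, norm_pow, norm_pow,
        Complex.norm_real, Real.norm_of_nonneg hs.le, he, norm_div, Complex.norm_real,
        Real.norm_of_nonneg hs.le]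
      ring
    rw [hfx]
    calc s^(4*n+2) * (‖x - (s:ℂ)‖/s)^(2*n+2) * ‖Q.eval (x/(s:ℂ))‖ / ‖x‖^(2*n+1)
        ≤ s^(4*n+2) * (‖x - (s:ℂ)‖/s)^(2*n+2) * (M+1) / (s/2)^(2*n+1) := by
          gcongr
      _ = K * ‖x - (s:ℂ)‖^(2*n+2) := by
          rw [hKdef, div_pow]
          field_simp
          have h12 : (1/2:ℝ)^(n*2) * 2^(n*2) = 1 := by rw [← mul_pow]; norm_num
          linear_combination (-(s^3 * s^(n*4) * ‖x - (s:ℂ)‖^2 * ‖x - (s:ℂ)‖^(n*2))) * h12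
  have hpart1 : cse (fun x : ℂ => F x ((s:ℂ)^2/x)) ((s:ℝ):ℂ) ≤ 1/(2*(n:ℝ)+2) := by
    unfold cse
    apply Real.sSup_le _ (by positivity)
    rintro γ ⟨hγ0, r, hr, hfin⟩
    by_contra hlt
    push_neg at hlt
    apply hfin.ne
    set β := 2*γ*(2*(n:ℝ)+2) with hβdef
    have hβ2 : 2 ≤ β := by
      rw [div_lt_iff₀ (by positivity)] at hlt
      nlinarith
    set ρ := min r (s/2) with hρdef
    have hρ0 : 0 < ρ := lt_min hr (by linarith)
    have hρs : ρ ≤ s/2 := min_le_right _ _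
    have hroots : Set.Finite {x : ℂ | P.eval (x/(s:ℂ)) = 0} := by
      have hsub : {x : ℂ | P.eval (x/(s:ℂ)) = 0}
          ⊆ (fun x : ℂ => x/(s:ℂ)) ⁻¹' {w : ℂ | P.IsRoot w} := fun x hx => hx
      refine Set.Finite.subset (Set.Finite.preimage ?_ (Polynomial.finite_setOf_isRoot hP0)) hsub
      intro a _ b _ hab
      have h := congrArg (fun t : ℂ => t * (s:ℂ)) hab
      simpa [div_mul_cancel₀, hs0] using h
    have hN : volume ({x : ℂ | P.eval (x/(s:ℂ)) = 0} ∪ {0} : Set ℂ) = 0 :=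
      measure_union_null (hroots.measure_zero volume) (measure_singleton 0)
    have hae : ∀ᵐ x : ℂ, x ∈ Metric.ball ((s:ℝ):ℂ) ρ →
        ENNReal.ofReal (K ^ (-(2*γ))) * ENNReal.ofReal (‖x - ((s:ℝ):ℂ)‖ ^ (-β))
          ≤ ENNReal.ofReal (‖F x ((s:ℂ)^2/x)‖ ^ (-(2*γ))) := by
      filter_upwards [measure_eq_zero_iff_ae_notMem.1 hN] with x hxN hxball
      have hx0 : x ≠ 0 := fun h => hxN (Or.inr (by rw [h]; rfl))
      have hxr : P.eval (x/(s:ℂ)) ≠ 0 := fun h => hxN (Or.inl h)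
      have hf0 : F x ((s:ℂ)^2/x) ≠ 0 := by
        rw [hfib x hx0]
        exact div_ne_zero (mul_ne_zero (pow_ne_zero _ hs0) hxr) (pow_ne_zero _ hx0)
      have hfpos : 0 < ‖F x ((s:ℂ)^2/x)‖ := norm_pos_iff.2 hf0
      have hball2 : x ∈ Metric.ball ((s:ℝ):ℂ) (s/2) := Metric.ball_subset_ball hρs hxball
      have hle := hbound x hball2
      have h1 : (K * ‖x - ((s:ℝ):ℂ)‖^(2*n+2)) ^ (-(2*γ)) ≤ ‖F x ((s:ℂ)^2/x)‖ ^ (-(2*γ)) :=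
        Real.rpow_le_rpow_of_nonpos hfpos hle (by linarith)
      have h2 : (K * ‖x - ((s:ℝ):ℂ)‖^(2*n+2)) ^ (-(2*γ))
          = K ^ (-(2*γ)) * ‖x - ((s:ℝ):ℂ)‖ ^ (-β) := by
        rw [Real.mul_rpow hK0.le (by positivity),
          ← Real.rpow_natCast ‖x - ((s:ℝ):ℂ)‖ (2*n+2), ← Real.rpow_mul (norm_nonneg _)]
        congr 1
        push_cast
        rw [hβdef]
        ring
      rw [← ENNReal.ofReal_mul (by positivity), ← h2]
      exact ENNReal.ofReal_le_ofReal h1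
    refine top_le_iff.1 ?_
    calc (⊤:ℝ≥0∞) = ENNReal.ofReal (K ^ (-(2*γ)))
          * ∫⁻ x in Metric.ball ((s:ℝ):ℂ) ρ, ENNReal.ofReal (‖x - ((s:ℝ):ℂ)‖ ^ (-β)) := by
          rw [aux_div_top hβ2 _ hρ0,
            ENNReal.mul_top (ENNReal.ofReal_pos.2 (Real.rpow_pos_of_pos hK0 _)).ne']
      _ = ∫⁻ x in Metric.ball ((s:ℝ):ℂ) ρ,
            ENNReal.ofReal (K ^ (-(2*γ))) * ENNReal.ofReal (‖x - ((s:ℝ):ℂ)‖ ^ (-β)) :=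
          (lintegral_const_mul' _ _ ENNReal.ofReal_ne_top).symm
      _ ≤ ∫⁻ x in Metric.ball ((s:ℝ):ℂ) ρ, ENNReal.ofReal (‖F x ((s:ℂ)^2/x)‖ ^ (-(2*γ))) :=
          setLIntegral_mono_ae' measurableSet_ball hae
      _ ≤ ∫⁻ x in Metric.ball ((s:ℝ):ℂ) r, ENNReal.ofReal (‖F x ((s:ℂ)^2/x)‖ ^ (-(2*γ))) :=
          lintegral_mono_set (Metric.ball_subset_ball (min_le_left _ _))
  exact ⟨hpart1, hpart2, by rw [hmonox, hmonoy, min_self]⟩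
end

section
/- Define F : ℂ² → ℂ by F(x,y) := x + y − 2·√(|xy|). Then: (i) for every real t > 0, sSup{γ ≥ 0 : ∃ r > 0 with ∫_{B(√t, r)} |x + t/x − 2√t|^{−2γ} dλ(x) < ∞} = 1/2; and (ii) sSup{γ ≥ 0 : ∃ r > 0 with ∫_{B(0,r)} |x|^{−2γ} dλ(x) < ∞} = 1. In particular, the complex singularity exponent of f₀ = F|_{X₀} at (0,0) equals 1, while the complex singularity exponent of f_t = F|_{X_t} at (√t, √t) equals 1/2 for every t > 0, so 1 = c_{(0,0)}(f₀) > liminf_{t→0⁺} c_{(√t,√t)}(f_t) = 1/2. -/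
open MeasureTheory Set Metric
open scoped ENNReal NNReal


lemma measRpow (s : ℝ) : Measurable fun x : ℂ => ‖x‖ ^ (-s) := by fun_prop

lemma pi_coe_eq : (NNReal.pi : ℝ≥0∞) = ENNReal.ofReal Real.pi := by
  rw [← NNReal.coe_real_pi, ENNReal.ofReal_coe_nnreal]

lemma finA {s r : ℝ} (hs0 : 0 ≤ s) (hs2 : s < 2) (hr : 0 < r) :
    ∫⁻ x in ball (0:ℂ) r, ENNReal.ofReal (‖x‖ ^ (-s)) < ⊤ := by
  rcases eq_or_lt_of_le hs0 with h0 | hs0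
  · simp only [← h0, neg_zero, Real.rpow_zero, ENNReal.ofReal_one]
    rw [setLIntegral_one]
    exact measure_ball_lt_top
  set μ := volume.restrict (ball (0:ℂ) r) with hμ
  rw [lintegral_eq_lintegral_meas_le μ (ae_of_all _ fun x => Real.rpow_nonneg (norm_nonneg _) _)
    (measRpow s).aemeasurable]
  have key : ∀ t ∈ Ioi (1:ℝ), μ {a : ℂ | t ≤ ‖a‖ ^ (-s)} ≤ ENNReal.ofReal (t ^ (-(2/s)) * Real.pi) := by
    intro t ht
    have ht1 : (1:ℝ) < t := ht
    have ht0 : (0:ℝ) < t := lt_trans one_pos ht1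
    have h1 : μ {a : ℂ | t ≤ ‖a‖ ^ (-s)} ≤ volume (closedBall (0:ℂ) (t ^ (-s)⁻¹)) := by
      refine le_trans (Measure.restrict_le_self _) (measure_mono ?_)
      intro a ha
      simp only [mem_setOf_eq] at ha
      simp only [mem_closedBall_zero_iff]
      rcases eq_or_ne a 0 with rfl | ha0
      · exfalso
        rw [norm_zero, Real.zero_rpow (neg_lt_zero.mpr hs0).ne] at ha
        linarith
      · have hna : 0 < ‖a‖ := norm_pos_iff.mpr ha0
        exact (Real.le_rpow_inv_iff_of_neg hna ht0 (neg_lt_zero.mpr hs0)).mpr ha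
    refine h1.trans ?_
    have h2 : (ENNReal.ofReal (t ^ (-s)⁻¹)) ^ 2 = ENNReal.ofReal (t ^ (-(2/s))) := by
      rw [← ENNReal.ofReal_pow (by positivity)]
      congr 1
      rw [← Real.rpow_natCast (t ^ (-s)⁻¹) 2, ← Real.rpow_mul ht0.le]
      congr 1
      field_simp
      norm_num
    rw [Complex.volume_closedBall, h2, pi_coe_eq, ← ENNReal.ofReal_mul (by positivity)]
  calc ∫⁻ t in Ioi (0:ℝ), μ {a : ℂ | t ≤ ‖a‖ ^ (-s)}
      ≤ (∫⁻ t in Ioc (0:ℝ) 1, μ {a : ℂ | t ≤ ‖a‖ ^ (-s)}) +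
        ∫⁻ t in Ioi (1:ℝ), μ {a : ℂ | t ≤ ‖a‖ ^ (-s)} :=
        le_trans (lintegral_mono_set Ioi_subset_Ioc_union_Ioi) (lintegral_union_le _ _ _)
    _ < ⊤ := by
        refine ENNReal.add_lt_top.2 ⟨?_, ?_⟩
        · have hb : ∀ t : ℝ, μ {a : ℂ | t ≤ ‖a‖ ^ (-s)} ≤ volume (ball (0:ℂ) r) := fun t =>
            calc μ {a : ℂ | t ≤ ‖a‖ ^ (-s)} ≤ μ univ := measure_mono (subset_univ _)
              _ = volume (ball (0:ℂ) r) := Measure.restrict_apply_univ _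
          calc (∫⁻ t in Ioc (0:ℝ) 1, μ {a : ℂ | t ≤ ‖a‖ ^ (-s)})
              ≤ ∫⁻ _ in Ioc (0:ℝ) 1, volume (ball (0:ℂ) r) :=
                setLIntegral_mono' measurableSet_Ioc (fun t _ => hb t)
            _ = volume (ball (0:ℂ) r) * volume (Ioc (0:ℝ) 1) := setLIntegral_const _ _
            _ < ⊤ := ENNReal.mul_lt_top measure_ball_lt_top
                (by rw [Real.volume_Ioc]; exact ENNReal.ofReal_lt_top)
        · refine lt_of_le_of_lt (setLIntegral_mono' measurableSet_Ioi key) ?_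
          refine IntegrableOn.setLIntegral_lt_top ?_
          have he : -(2/s) < -1 := by
            rw [neg_lt_neg_iff, lt_div_iff₀ hs0]
            linarith
          exact (integrableOn_Ioi_rpow_of_lt he one_pos).mul_const _

lemma inv_lint_top {T : ℝ} (hT : 0 < T) : ∫⁻ t in Ioi T, ENNReal.ofReal t⁻¹ = ⊤ := by
  by_contra h
  have hi : IntegrableOn (fun t : ℝ => t⁻¹) (Ioi T) := by
    constructor
    · exact (measurable_inv.aestronglyMeasurable)
    · rw [hasFiniteIntegral_iff_ofReal ?_]
      · exact lt_top_iff_ne_top.mpr h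
      · filter_upwards [ae_restrict_mem measurableSet_Ioi] with t ht
        exact (inv_nonneg.mpr (hT.trans ht).le)
  have : IntegrableOn (fun t : ℝ => t ^ (-1 : ℝ)) (Ioi T) := by
    refine hi.congr_fun (fun t ht => ?_) measurableSet_Ioi
    rw [Real.rpow_neg_one]
  rw [integrableOn_Ioi_rpow_iff hT] at this
  linarith

lemma infB2 {r : ℝ} (hr : 0 < r) :
    ∫⁻ x in ball (0:ℂ) r, ENNReal.ofReal (‖x‖ ^ (-(2:ℝ))) = ⊤ := by
  set μ := volume.restrict (ball (0:ℂ) r) with hμ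
  rw [lintegral_eq_lintegral_meas_le μ (ae_of_all _ fun x => Real.rpow_nonneg (norm_nonneg _) _)
    (measRpow 2).aemeasurable]
  rw [eq_top_iff]
  set T := r ^ (-2 : ℝ) with hT
  have hT0 : 0 < T := Real.rpow_pos_of_pos hr _
  have key : ∀ t ∈ Ioi T, ENNReal.ofReal (t⁻¹ / 4 * Real.pi) ≤ μ {a : ℂ | t ≤ ‖a‖ ^ (-(2:ℝ))} := by
    intro t ht
    have ht' : T < t := ht
    have ht0 : 0 < t := hT0.trans ht'
    set u := t ^ (-(2:ℝ))⁻¹ with hu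
    have hu0 : 0 < u := Real.rpow_pos_of_pos ht0 _
    have hur : u ≤ r := by
      have h1 : u ≤ T ^ (-(2:ℝ))⁻¹ :=
        Real.rpow_le_rpow_of_nonpos hT0 ht'.le (by norm_num)
      have h2 : T ^ (-(2:ℝ))⁻¹ = r := by
        rw [hT, ← Real.rpow_mul hr.le]
        norm_num
      rwa [h2] at h1
    have huu : u ^ (-(2:ℝ)) = t := by
      rw [hu, ← Real.rpow_mul ht0.le]
      norm_num
    have hsub : closedBall (0:ℂ) (u/2) \ {0} ⊆ {a : ℂ | t ≤ ‖a‖ ^ (-(2:ℝ))} ∩ ball (0:ℂ) r := by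
      rintro a ⟨haB, ha0⟩
      have ha0' : a ≠ 0 := by simpa using ha0
      have hna : 0 < ‖a‖ := norm_pos_iff.mpr ha0'
      rw [mem_closedBall_zero_iff] at haB
      constructor
      · have h3 : (u/2) ^ (-(2:ℝ)) ≤ ‖a‖ ^ (-(2:ℝ)) :=
          Real.rpow_le_rpow_of_nonpos hna haB (by norm_num)
        have h25 : (2:ℝ) ^ (-(2:ℝ)) = 1/4 := by
          rw [show (-(2:ℝ)) = ((-2 : ℤ) : ℝ) by norm_num, Real.rpow_intCast]
          norm_num
        have h4 : (u/2) ^ (-(2:ℝ)) = 4 * t := by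
          rw [Real.div_rpow hu0.le (by norm_num), huu, h25]
          ring
        simp only [mem_setOf_eq]
        nlinarith
      · rw [mem_ball_zero_iff]
        calc ‖a‖ ≤ u / 2 := haB
          _ < u := by linarith
          _ ≤ r := hur
    have hmeas : μ {a : ℂ | t ≤ ‖a‖ ^ (-(2:ℝ))} =
        volume ({a : ℂ | t ≤ ‖a‖ ^ (-(2:ℝ))} ∩ ball (0:ℂ) r) :=
      Measure.restrict_apply' measurableSet_ball
    rw [hmeas]
    refine le_trans ?_ (measure_mono hsub)
    have hdiff : volume (closedBall (0:ℂ) (u/2) \ {0}) = volume (closedBall (0:ℂ) (u/2)) :=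
      measure_diff_null (measure_singleton 0)
    rw [hdiff, Complex.volume_closedBall, pi_coe_eq, ← ENNReal.ofReal_pow (by positivity),
      ← ENNReal.ofReal_mul (by positivity)]
    apply ENNReal.ofReal_le_ofReal
    have hu2 : u^2 = t⁻¹ := by
      rw [hu, ← Real.rpow_natCast (t ^ (-2:ℝ)⁻¹) 2, ← Real.rpow_mul ht0.le,
        show ((-2:ℝ)⁻¹ * (2:ℕ) : ℝ) = -1 by norm_num, Real.rpow_neg_one]
    rw [div_pow, hu2]
    norm_num
  have hbig : (∫⁻ t in Ioi T, ENNReal.ofReal (t⁻¹ / 4 * Real.pi)) = ⊤ := by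
    have hcong : ∀ t ∈ Ioi T, ENNReal.ofReal (t⁻¹ / 4 * Real.pi)
        = ENNReal.ofReal (Real.pi/4) * ENNReal.ofReal t⁻¹ := by
      intro t ht
      have ht0 : (0:ℝ) < t := hT0.trans ht
      rw [← ENNReal.ofReal_mul (by positivity)]
      congr 1
      ring
    rw [setLIntegral_congr_fun measurableSet_Ioi hcong,
      lintegral_const_mul' _ _ ENNReal.ofReal_ne_top, inv_lint_top hT0,
      ENNReal.mul_top (ENNReal.ofReal_pos.mpr (by positivity)).ne']
  calc (⊤:ℝ≥0∞) = ∫⁻ t in Ioi T, ENNReal.ofReal (t⁻¹ / 4 * Real.pi) := hbig.symm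
    _ ≤ ∫⁻ t in Ioi T, μ {a : ℂ | t ≤ ‖a‖ ^ (-(2:ℝ))} := setLIntegral_mono' measurableSet_Ioi key
    _ ≤ ∫⁻ t in Ioi 0, μ {a : ℂ | t ≤ ‖a‖ ^ (-(2:ℝ))} := lintegral_mono_set (Ioi_subset_Ioi hT0.le)

lemma infB {s r : ℝ} (hs : 2 ≤ s) (hr : 0 < r) :
    ∫⁻ x in ball (0:ℂ) r, ENNReal.ofReal (‖x‖ ^ (-s)) = ⊤ := by
  rw [eq_top_iff]
  set ρ := min r 1 with hρ
  have hρ0 : 0 < ρ := lt_min hr one_pos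
  have hρ1 : ρ ≤ 1 := min_le_right _ _
  calc (⊤:ℝ≥0∞) = ∫⁻ x in ball (0:ℂ) ρ, ENNReal.ofReal (‖x‖ ^ (-(2:ℝ))) := (infB2 hρ0).symm
    _ ≤ ∫⁻ x in ball (0:ℂ) ρ, ENNReal.ofReal (‖x‖ ^ (-s)) := by
        refine setLIntegral_mono' measurableSet_ball fun x hx => ?_
        rcases eq_or_ne x 0 with rfl | hx0
        · rw [norm_zero, Real.zero_rpow (show -(2:ℝ) ≠ 0 by norm_num),
            Real.zero_rpow (show -s ≠ 0 by intro h; rw [neg_eq_zero] at h; linarith)]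
        · have h1 : 0 < ‖x‖ := norm_pos_iff.mpr hx0
          have h2 : ‖x‖ ≤ 1 := le_trans (le_of_lt (mem_ball_zero_iff.mp hx)) hρ1
          exact ENNReal.ofReal_le_ofReal
            (Real.rpow_le_rpow_of_exponent_ge h1 h2 (by linarith))
    _ ≤ ∫⁻ x in ball (0:ℂ) r, ENNReal.ofReal (‖x‖ ^ (-s)) :=
        lintegral_mono_set (ball_subset_ball (min_le_left _ _))

lemma lintTranslate (p : ℂ) (r s : ℝ) :
    (∫⁻ x in ball p r, ENNReal.ofReal (‖x - p‖ ^ (-s))) =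
    ∫⁻ x in ball (0:ℂ) r, ENNReal.ofReal (‖x‖ ^ (-s)) := by
  have hmp : MeasurePreserving (fun x : ℂ => x + p) volume volume :=
    measurePreserving_add_right volume p
  have hemb : MeasurableEmbedding (fun x : ℂ => x + p) :=
    (Homeomorph.addRight p).measurableEmbedding
  have himg : (fun x : ℂ => x + p) '' ball (0:ℂ) r = ball p r := by
    ext x
    simp only [Set.mem_image, Metric.mem_ball, dist_eq_norm]
    constructor
    · rintro ⟨y, hy, rfl⟩
      simpa using hy
    · intro hx
      exact ⟨x - p, by simpa using hx, by ring⟩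
  rw [← himg, ← hmp.setLIntegral_comp_emb hemb
    (fun y => ENNReal.ofReal (‖y - p‖ ^ (-s))) (ball (0:ℂ) r)]
  simp


-- key facts for part (i)
section fiber
variable {t : ℝ} (ht : 0 < t)

lemma fiber_norm (ht : 0 < t) {x : ℂ} (hx : x ≠ 0) :
    ‖x + (t : ℂ) / x - 2 * ((Real.sqrt t : ℝ) : ℂ)‖
      = ‖x - ((Real.sqrt t : ℝ) : ℂ)‖ ^ 2 / ‖x‖ := by
  have hsq : (((Real.sqrt t : ℝ) : ℂ)) ^ 2 = (t : ℂ) := by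
    rw [← Complex.ofReal_pow, Real.sq_sqrt ht.le]
  have hid : x + (t : ℂ) / x - 2 * ((Real.sqrt t : ℝ) : ℂ)
      = (x - ((Real.sqrt t : ℝ) : ℂ)) ^ 2 / x := by
    field_simp
    rw [← hsq]
    ring
  rw [hid, norm_div, norm_pow]

end fiber

lemma setI {t : ℝ} (ht : 0 < t) :
    {γ : ℝ | 0 ≤ γ ∧ ∃ r : ℝ, 0 < r ∧
      (∫⁻ x in ball ((Real.sqrt t : ℝ) : ℂ) r,
        ENNReal.ofReal (‖x + (t : ℂ) / x - 2 * ((Real.sqrt t : ℝ) : ℂ)‖ ^ (-(2 * γ)))) < ⊤}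
    = Ico (0:ℝ) (1/2) := by
  set a := Real.sqrt t with ha_def
  have ha : 0 < a := Real.sqrt_pos.mpr ht
  set ac : ℂ := ((a : ℝ) : ℂ) with hac_def
  have hnac : ‖ac‖ = a := by
    rw [hac_def, Complex.norm_real, Real.norm_eq_abs, abs_of_pos ha]
  have hballfacts : ∀ ρ : ℝ, ρ ≤ a/2 → ∀ x ∈ ball ac ρ,
      a/2 < ‖x‖ ∧ ‖x‖ < 3*a/2 ∧ x ≠ 0 ∧ ‖x - ac‖ < ρ := by
    intro ρ hρ x hx
    rw [mem_ball, dist_eq_norm] at hx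
    have h1 : ‖ac‖ - ‖x - ac‖ ≤ ‖x‖ := by
      have := norm_sub_norm_le ac x
      rw [norm_sub_rev ac x] at this
      linarith
    have h2 : ‖x‖ ≤ ‖ac‖ + ‖x - ac‖ := by
      have := norm_add_le ac (x - ac)
      simpa using this
    rw [hnac] at h1 h2
    have hxl : a/2 < ‖x‖ := by linarith
    refine ⟨hxl, by linarith, ?_, hx⟩
    intro h
    rw [h, norm_zero] at hxl
    linarith
  ext γ
  simp only [mem_setOf_eq, mem_Ico]
  constructor
  · rintro ⟨h0, r, hr, hint⟩
    refine ⟨h0, ?_⟩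
    by_contra h12
    push_neg at h12
    -- derive that integral is infinite
    set ρ := min r (min (a/2) 1) with hρ_def
    have hρ0 : 0 < ρ := lt_min hr (lt_min (by linarith) one_pos)
    have hρr : ρ ≤ r := min_le_left _ _
    have hρa : ρ ≤ a/2 := le_trans (min_le_right _ _) (min_le_left _ _)
    have hρ1 : ρ ≤ 1 := le_trans (min_le_right _ _) (min_le_right _ _)
    set c : ℝ := (2/a) ^ (-(2*γ)) with hc_def
    have hc : 0 < c := Real.rpow_pos_of_pos (by positivity) _
    have hbound : ∀ x ∈ ball ac ρ,
        ENNReal.ofReal c * ENNReal.ofReal (‖x - ac‖ ^ (-(2:ℝ)))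
          ≤ ENNReal.ofReal (‖x + (t : ℂ) / x - 2 * ac‖ ^ (-(2 * γ))) := by
      intro x hx
      obtain ⟨hxl, hxu, hx0, hxd⟩ := hballfacts ρ hρa x hx
      rcases eq_or_ne x ac with rfl | hxa
      · simp [Real.zero_rpow (show -(2:ℝ) ≠ 0 by norm_num)]
      · have hda : 0 < ‖x - ac‖ := by
          rw [norm_pos_iff, sub_ne_zero]; exact hxa
        have hfn := fiber_norm ht hx0
        have hfpos : 0 < ‖x + (t : ℂ) / x - 2 * ac‖ := by
          rw [hfn]
          exact div_pos (pow_pos hda 2) (lt_trans (by linarith : (0:ℝ) < a/2) hxl)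
        have hb : ‖x + (t : ℂ) / x - 2 * ac‖ ≤ (2/a) * ‖x - ac‖ ^ 2 := by
          rw [hfn]
          have h5 : ‖x - ac‖ ^ 2 / ‖x‖ ≤ ‖x - ac‖ ^ 2 / (a/2) :=
            div_le_div_of_nonneg_left (by positivity) (by linarith) hxl.le
          have h6 : ‖x - ac‖ ^ 2 / (a/2) = (2/a) * ‖x - ac‖ ^ 2 := by
            field_simp
          linarith
        have step1 : ((2/a) * ‖x - ac‖ ^ 2) ^ (-(2*γ))
            ≤ ‖x + (t : ℂ) / x - 2 * ac‖ ^ (-(2*γ)) :=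
          Real.rpow_le_rpow_of_nonpos hfpos hb (by linarith)
        have step2 : ((2/a) * ‖x - ac‖ ^ 2) ^ (-(2*γ))
            = c * (‖x - ac‖ ^ 2) ^ (-(2*γ)) :=
          Real.mul_rpow (by positivity) (by positivity)
        have step3 : ‖x - ac‖ ^ (-(2:ℝ)) ≤ (‖x - ac‖ ^ 2) ^ (-(2*γ)) := by
          have he : (‖x - ac‖ ^ 2 : ℝ) ^ (-(2*γ)) = ‖x - ac‖ ^ ((2:ℝ) * (-(2*γ))) := by
            rw [Real.rpow_mul (norm_nonneg _), Real.rpow_two]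
          rw [he]
          exact Real.rpow_le_rpow_of_exponent_ge hda (by linarith) (by nlinarith)
        rw [← ENNReal.ofReal_mul hc.le]
        apply ENNReal.ofReal_le_ofReal
        calc c * ‖x - ac‖ ^ (-(2:ℝ)) ≤ c * (‖x - ac‖ ^ 2) ^ (-(2*γ)) :=
              mul_le_mul_of_nonneg_left step3 hc.le
          _ = ((2/a) * ‖x - ac‖ ^ 2) ^ (-(2*γ)) := step2.symm
          _ ≤ _ := step1
    have htop : (∫⁻ x in ball ac r,
        ENNReal.ofReal (‖x + (t : ℂ) / x - 2 * ac‖ ^ (-(2 * γ)))) = ⊤ := by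
      rw [eq_top_iff]
      calc (⊤:ℝ≥0∞) = ENNReal.ofReal c * ∫⁻ x in ball ac ρ,
            ENNReal.ofReal (‖x - ac‖ ^ (-(2:ℝ))) := by
            rw [lintTranslate ac ρ 2, infB2 hρ0,
              ENNReal.mul_top (ENNReal.ofReal_pos.mpr hc).ne']
        _ = ∫⁻ x in ball ac ρ,
            ENNReal.ofReal c * ENNReal.ofReal (‖x - ac‖ ^ (-(2:ℝ))) :=
            (lintegral_const_mul' _ _ ENNReal.ofReal_ne_top).symm
        _ ≤ ∫⁻ x in ball ac ρ,
            ENNReal.ofReal (‖x + (t : ℂ) / x - 2 * ac‖ ^ (-(2 * γ))) :=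
            setLIntegral_mono' measurableSet_ball hbound
        _ ≤ _ := lintegral_mono_set (ball_subset_ball hρr)
    rw [htop] at hint
    exact lt_irrefl _ hint
  · rintro ⟨h0, h12⟩
    refine ⟨h0, a/2, by linarith, ?_⟩
    set c : ℝ := (2/(3*a)) ^ (-(2*γ)) with hc_def
    have hc : 0 < c := Real.rpow_pos_of_pos (by positivity) _
    have hbound : ∀ x ∈ ball ac (a/2),
        ENNReal.ofReal (‖x + (t : ℂ) / x - 2 * ac‖ ^ (-(2 * γ)))
          ≤ ENNReal.ofReal c * ENNReal.ofReal (‖x - ac‖ ^ (-(4*γ))) := by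
      intro x hx
      obtain ⟨hxl, hxu, hx0, hxd⟩ := hballfacts (a/2) le_rfl x hx
      have hfn := fiber_norm ht hx0
      rcases eq_or_ne x ac with rfl | hxa
      · rw [hfn]
        simp only [sub_self, norm_zero]
        rcases eq_or_lt_of_le h0 with hγ0 | hγ0
        · subst hγ0
          norm_num [hc_def]
        · rw [Real.zero_rpow (show -(4*γ) ≠ 0 by intro h; rw [neg_eq_zero] at h; linarith)]
          rw [show ac - ((Real.sqrt t : ℝ) : ℂ) = 0 from sub_self _, norm_zero]
          rw [show (0:ℝ)^2/‖ac‖ = 0 by simp, Real.zero_rpow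
            (show -(2*γ) ≠ 0 by intro h; rw [neg_eq_zero] at h; linarith)]
          simp
      · have hda : 0 < ‖x - ac‖ := by
          rw [norm_pos_iff, sub_ne_zero]; exact hxa
        have hfpos : 0 < ‖x + (t : ℂ) / x - 2 * ac‖ := by
          rw [hfn]
          exact div_pos (pow_pos hda 2) (lt_trans (by linarith : (0:ℝ) < a/2) hxl)
        have hb : (2/(3*a)) * ‖x - ac‖ ^ 2 ≤ ‖x + (t : ℂ) / x - 2 * ac‖ := by
          rw [hfn]
          have h5 : ‖x - ac‖ ^ 2 / (3*a/2) ≤ ‖x - ac‖ ^ 2 / ‖x‖ :=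
            div_le_div_of_nonneg_left (by positivity) (by linarith) hxu.le
          have h6 : ‖x - ac‖ ^ 2 / (3*a/2) = (2/(3*a)) * ‖x - ac‖ ^ 2 := by
            field_simp
          linarith
        have step1 : ‖x + (t : ℂ) / x - 2 * ac‖ ^ (-(2*γ))
            ≤ ((2/(3*a)) * ‖x - ac‖ ^ 2) ^ (-(2*γ)) :=
          Real.rpow_le_rpow_of_nonpos (by positivity) hb (by linarith)
        have step2 : ((2/(3*a)) * ‖x - ac‖ ^ 2) ^ (-(2*γ))
            = c * ‖x - ac‖ ^ (-(4*γ)) := by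
          rw [Real.mul_rpow (by positivity) (by positivity)]
          congr 1
          rw [← Real.rpow_two, ← Real.rpow_mul (norm_nonneg _)]
          congr 1
          ring
        rw [← ENNReal.ofReal_mul hc.le]
        apply ENNReal.ofReal_le_ofReal
        calc ‖x + (t : ℂ) / x - 2 * ac‖ ^ (-(2*γ))
            ≤ ((2/(3*a)) * ‖x - ac‖ ^ 2) ^ (-(2*γ)) := step1
          _ = c * ‖x - ac‖ ^ (-(4*γ)) := step2
    calc (∫⁻ x in ball ac (a/2),
          ENNReal.ofReal (‖x + (t : ℂ) / x - 2 * ac‖ ^ (-(2 * γ))))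
        ≤ ∫⁻ x in ball ac (a/2),
          ENNReal.ofReal c * ENNReal.ofReal (‖x - ac‖ ^ (-(4*γ))) :=
          setLIntegral_mono' measurableSet_ball hbound
      _ = ENNReal.ofReal c * ∫⁻ x in ball ac (a/2),
          ENNReal.ofReal (‖x - ac‖ ^ (-(4*γ))) :=
          lintegral_const_mul' _ _ ENNReal.ofReal_ne_top
      _ < ⊤ := by
          rw [lintTranslate ac (a/2) (4*γ)]
          exact ENNReal.mul_lt_top ENNReal.ofReal_lt_top
            (finA (by positivity) (by linarith) (by linarith))

/-- For the non-holomorphic family `F(x,y) = x + y - 2√(|xy|)` along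
`π(x,y) = xy`: (i) for every `t > 0`, the complex singularity exponent at
`x = √t` of the fiber restriction `f_t(x) = x + t/x - 2√t` equals `1/2`, while
(ii) the complex singularity exponent of `F(x,0) = x` at `x = 0` equals `1`.
Hence lower semi-continuity of complex singularity exponents fails:
`1 = c_{(0,0)}(f₀) > liminf_{t→0⁺} c_{(√t,√t)}(f_t) = 1/2`. -/
theorem cse_counterexample_sqrt :
    (∀ t : ℝ, 0 < t →
      sSup {γ : ℝ | 0 ≤ γ ∧ ∃ r : ℝ, 0 < r ∧
        (∫⁻ x in Metric.ball ((Real.sqrt t : ℝ) : ℂ) r,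
          ENNReal.ofReal (‖x + (t : ℂ) / x - 2 * ((Real.sqrt t : ℝ) : ℂ)‖ ^ (-(2 * γ)))) < ⊤}
        = 1 / 2) ∧
    sSup {γ : ℝ | 0 ≤ γ ∧ ∃ r : ℝ, 0 < r ∧
        (∫⁻ x in Metric.ball (0 : ℂ) r, ENNReal.ofReal (‖x‖ ^ (-(2 * γ)))) < ⊤} = 1 := by
  constructor
  · intro t ht
    rw [setI ht]
    exact csSup_Ico (by norm_num)
  · have hset : {γ : ℝ | 0 ≤ γ ∧ ∃ r : ℝ, 0 < r ∧
        (∫⁻ x in Metric.ball (0 : ℂ) r, ENNReal.ofReal (‖x‖ ^ (-(2 * γ)))) < ⊤}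
        = Ico (0:ℝ) 1 := by
      ext γ
      simp only [mem_setOf_eq, mem_Ico]
      constructor
      · rintro ⟨h0, r, hr, hint⟩
        refine ⟨h0, ?_⟩
        by_contra h1
        push_neg at h1
        rw [infB (by linarith) hr] at hint
        exact lt_irrefl _ hint
      · rintro ⟨h0, h1⟩
        exact ⟨h0, 1, one_pos, finA (by positivity) (by linarith) one_pos⟩
    rw [hset]
    exact csSup_Ico (by norm_num)
end

section
/- For every n ∈ ℕ, the function f : ℂ × ℂ → ℝ given by f(x,y) = |x·y|^{(2n+1)/2} is n times continuously differentiable in the real sense (ContDiff ℝ n), and for every compact set K ⊆ ℂ × ℂ there is a constant C ≥ 0 such that the n-th iterated derivative of f is 1/2-Hölder continuous on K with constant C. In other words, |xy|^{(2n+1)/2} belongs to C^{n,1/2}_loc(ℂ²). -/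
set_option maxHeartbeats 1600000

open Set Metric Filter

noncomputable section AbsPowAux

def ffOm : Set (ℂ × ℂ) := {p | p.1 ≠ 0 ∧ p.2 ≠ 0}

lemma ffOm_open : IsOpen ffOm := by
  have h1 : IsOpen {p : ℂ × ℂ | p.1 ≠ 0} :=
    isOpen_compl_singleton.preimage continuous_fst
  have h2 : IsOpen {p : ℂ × ℂ | p.2 ≠ 0} :=
    isOpen_compl_singleton.preimage continuous_snd
  exact h1.inter h2

def ffF (α : ℝ) : ℂ × ℂ → ℝ := fun p => ‖p.1‖ ^ α * ‖p.2‖ ^ α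

lemma ffF_smooth (α : ℝ) (m : ℕ) : ContDiffOn ℝ m (ffF α) ffOm := by
  intro p hp
  apply ContDiffAt.contDiffWithinAt
  have h1 : ContDiffAt ℝ m (fun q : ℂ × ℂ => ‖q.1‖ ^ α) p := by
    have : ContDiffAt ℝ m (fun q : ℂ × ℂ => ‖q.1‖) p :=
      (contDiffAt_norm (𝕜 := ℝ) hp.1).comp p contDiff_fst.contDiffAt
    exact this.rpow_const_of_ne (norm_ne_zero_iff.2 hp.1)
  have h2 : ContDiffAt ℝ m (fun q : ℂ × ℂ => ‖q.2‖ ^ α) p := by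
    have : ContDiffAt ℝ m (fun q : ℂ × ℂ => ‖q.2‖) p :=
      (contDiffAt_norm (𝕜 := ℝ) hp.2).comp p contDiff_snd.contDiffAt
    exact this.rpow_const_of_ne (norm_ne_zero_iff.2 hp.2)
  exact h1.mul h2

lemma ffF_cont (α : ℝ) (hα : 0 ≤ α) : Continuous (ffF α) := by
  rw [continuous_iff_continuousAt]
  intro p
  have h1 : ContinuousAt (fun q : ℂ × ℂ => ‖q.1‖ ^ α) p :=
    (Real.continuousAt_rpow_const _ _ (Or.inr hα)).comp
      ((continuous_norm.comp continuous_fst).continuousAt)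
  have h2 : ContinuousAt (fun q : ℂ × ℂ => ‖q.2‖ ^ α) p :=
    (Real.continuousAt_rpow_const _ _ (Or.inr hα)).comp
      ((continuous_norm.comp continuous_snd).continuousAt)
  exact h1.mul h2

lemma diffAt_of_open {u : ℂ × ℂ → ℝ} {s : Set (ℂ × ℂ)} (hs : IsOpen s) {m k : ℕ}
    (hu : ContDiffOn ℝ m u s) (hk : k < m) {x : ℂ × ℂ} (hx : x ∈ s) :
    DifferentiableAt ℝ (iteratedFDeriv ℝ k u) x := by
  have h1 := hu.differentiableOn_iteratedFDerivWithin (m := k)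
    (by exact_mod_cast hk) hs.uniqueDiffOn x hx
  have h2 : iteratedFDerivWithin ℝ k u s =ᶠ[nhds x] iteratedFDeriv ℝ k u :=
    Filter.eventually_of_mem (hs.mem_nhds hx)
      (fun y hy => iteratedFDerivWithin_of_isOpen k hs hy)
  exact (h2.differentiableAt_iff).1 (h1.differentiableAt (hs.mem_nhds hx))

lemma contAt_of_open {u : ℂ × ℂ → ℝ} {s : Set (ℂ × ℂ)} (hs : IsOpen s) {m k : ℕ}
    (hu : ContDiffOn ℝ m u s) (hk : k ≤ m) {x : ℂ × ℂ} (hx : x ∈ s) :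
    ContinuousAt (iteratedFDeriv ℝ k u) x := by
  have h1 := hu.continuousOn_iteratedFDerivWithin (m := k)
    (by exact_mod_cast hk) hs.uniqueDiffOn x hx
  have h2 : iteratedFDerivWithin ℝ k u s =ᶠ[nhds x] iteratedFDeriv ℝ k u :=
    Filter.eventually_of_mem (hs.mem_nhds hx)
      (fun y hy => iteratedFDerivWithin_of_isOpen k hs hy)
  exact (h1.continuousAt (hs.mem_nhds hx)).congr h2


lemma ffF_bound (α : ℝ) (hα : 0 ≤ α) (k : ℕ) {R : ℝ} (hR : 1 ≤ R) :
    ∃ C, 0 ≤ C ∧ ∀ x y : ℂ, x ≠ 0 → y ≠ 0 → ‖x‖ ≤ R → ‖y‖ ≤ R →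
      ‖iteratedFDeriv ℝ k (ffF α) (x, y)‖ ≤ C * (min ‖x‖ ‖y‖) ^ (α - k) := by
  -- torus bound
  obtain ⟨M, hM⟩ : ∃ M, ∀ u ∈ (sphere (0:ℂ) 1) ×ˢ (sphere (0:ℂ) 1),
      ‖iteratedFDeriv ℝ k (ffF α) u‖ ≤ M := by
    apply ((isCompact_sphere (0:ℂ) 1).prod (isCompact_sphere (0:ℂ) 1)).exists_bound_of_continuousOn
    intro u hu
    have hu1 : u.1 ≠ 0 := by
      have := hu.1; rw [mem_sphere_zero_iff_norm] at this
      intro h; rw [h] at this; simp at this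
    have hu2 : u.2 ≠ 0 := by
      have := hu.2; rw [mem_sphere_zero_iff_norm] at this
      intro h; rw [h] at this; simp at this
    exact (contAt_of_open ffOm_open (ffF_smooth α k) le_rfl ⟨hu1, hu2⟩).continuousWithinAt
  set M' := max M 0 with hM'
  have hM'0 : 0 ≤ M' := le_max_right _ _
  refine ⟨M' * R ^ α, by positivity, ?_⟩
  intro x y hx hy hxR hyR
  set c := ‖x‖ with hc
  set c' := ‖y‖ with hc'
  have hc0 : 0 < c := norm_pos_iff.2 hx
  have hc'0 : 0 < c' := norm_pos_iff.2 hy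
  set m0 := min c c' with hm0
  have hm00 : 0 < m0 := lt_min hc0 hc'0
  set L : ℂ × ℂ →L[ℝ] ℂ × ℂ :=
    (c • ContinuousLinearMap.id ℝ ℂ).prodMap (c' • ContinuousLinearMap.id ℝ ℂ) with hL
  set Linv : ℂ × ℂ →L[ℝ] ℂ × ℂ :=
    (c⁻¹ • ContinuousLinearMap.id ℝ ℂ).prodMap (c'⁻¹ • ContinuousLinearMap.id ℝ ℂ) with hLinv
  have hLapp : ∀ w : ℂ × ℂ, L w = (c • w.1, c' • w.2) := fun w => rfl
  have hLinvapp : ∀ w : ℂ × ℂ, Linv w = (c⁻¹ • w.1, c'⁻¹ • w.2) := fun w => rfl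
  set u : ℂ × ℂ := ((c⁻¹ : ℝ) • x, (c'⁻¹ : ℝ) • y) with hu
  have hnu1 : ‖(c⁻¹ : ℝ) • x‖ = 1 := by
    rw [norm_smul, Real.norm_eq_abs, abs_of_pos (inv_pos.2 hc0)]
    exact inv_mul_cancel₀ hc0.ne'
  have hnu2 : ‖(c'⁻¹ : ℝ) • y‖ = 1 := by
    rw [norm_smul, Real.norm_eq_abs, abs_of_pos (inv_pos.2 hc'0)]
    exact inv_mul_cancel₀ hc'0.ne'
  have huT : u ∈ (sphere (0:ℂ) 1) ×ˢ (sphere (0:ℂ) 1) :=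
    ⟨by rw [mem_sphere_zero_iff_norm]; exact hnu1,
     by rw [mem_sphere_zero_iff_norm]; exact hnu2⟩
  have hu1 : u.1 ≠ 0 := smul_ne_zero (inv_ne_zero hc0.ne') hx
  have hu2 : u.2 ≠ 0 := smul_ne_zero (inv_ne_zero hc'0.ne') hy
  have huOm : u ∈ ffOm := ⟨hu1, hu2⟩
  have hLu : L u = (x, y) := by
    rw [hLapp]
    simp only [hu, smul_smul]
    rw [mul_inv_cancel₀ hc0.ne', mul_inv_cancel₀ hc'0.ne', one_smul, one_smul]
  have hpre : L ⁻¹' ffOm = ffOm := by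
    ext w
    simp only [Set.mem_preimage, ffOm, Set.mem_setOf_eq, hLapp]
    constructor
    · rintro ⟨h1, h2⟩
      refine ⟨fun h0 => h1 ?_, fun h0 => h2 ?_⟩
      · rw [h0, smul_zero]
      · rw [h0, smul_zero]
    · rintro ⟨h1, h2⟩
      exact ⟨smul_ne_zero hc0.ne' h1, smul_ne_zero hc'0.ne' h2⟩
  have hsm : ContDiffOn ℝ k (ffF α) ffOm := ffF_smooth α k
  have hA := ContinuousLinearMap.iteratedFDerivWithin_comp_right (f := ffF α) L hsm
    ffOm_open.uniqueDiffOn (by rw [hpre]; exact ffOm_open.uniqueDiffOn)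
    (x := u) (by rw [hLu]; exact ⟨hx, hy⟩) (i := k) le_rfl
  rw [hpre] at hA
  have hcomp : ffF α ∘ L = (c ^ α * c' ^ α) • ffF α := by
    funext w
    simp only [Function.comp_apply, hLapp, ffF, Pi.smul_apply, smul_eq_mul]
    rw [norm_smul, norm_smul, Real.norm_eq_abs, Real.norm_eq_abs,
      abs_of_pos hc0, abs_of_pos hc'0,
      Real.mul_rpow hc0.le (norm_nonneg _), Real.mul_rpow hc'0.le (norm_nonneg _)]
    ring
  have hB : iteratedFDerivWithin ℝ k ((c ^ α * c' ^ α) • ffF α) ffOm u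
      = (c ^ α * c' ^ α) • iteratedFDerivWithin ℝ k (ffF α) ffOm u :=
    iteratedFDerivWithin_const_smul_apply (hsm u huOm) ffOm_open.uniqueDiffOn huOm
  rw [hcomp, hB] at hA
  -- hA : (c^α*c'^α) • D u = (D (L u)).compCLM L  (direction check!)
  set D := iteratedFDerivWithin ℝ k (ffF α) ffOm with hD
  have hLL : ∀ w : ℂ × ℂ, L (Linv w) = w := by
    intro w
    rw [hLinvapp, hLapp]
    simp only [smul_smul]
    rw [mul_inv_cancel₀ hc0.ne', mul_inv_cancel₀ hc'0.ne', one_smul, one_smul]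
  have hT : D (L u) = ((D (L u)).compContinuousLinearMap fun _ => L).compContinuousLinearMap
      (fun _ => Linv) := by
    ext m
    simp only [ContinuousMultilinearMap.compContinuousLinearMap_apply, hLL]
  have hLinv_norm : ‖Linv‖ ≤ m0⁻¹ := by
    apply ContinuousLinearMap.opNorm_le_bound _ (by positivity)
    intro w
    rw [hLinvapp]
    have h1 : ‖(c⁻¹ : ℝ) • w.1‖ ≤ m0⁻¹ * ‖w‖ := by
      rw [norm_smul, Real.norm_eq_abs, abs_of_pos (inv_pos.2 hc0)]
      exact mul_le_mul (by gcongr; exact min_le_left _ _) (norm_fst_le w) (norm_nonneg _)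
        (by positivity)
    have h2 : ‖(c'⁻¹ : ℝ) • w.2‖ ≤ m0⁻¹ * ‖w‖ := by
      rw [norm_smul, Real.norm_eq_abs, abs_of_pos (inv_pos.2 hc'0)]
      exact mul_le_mul (by gcongr; exact min_le_right _ _) (norm_snd_le w) (norm_nonneg _)
        (by positivity)
    calc ‖((c⁻¹:ℝ) • w.1, (c'⁻¹:ℝ) • w.2)‖ = max ‖(c⁻¹:ℝ) • w.1‖ ‖(c'⁻¹:ℝ) • w.2‖ := rfl
    _ ≤ m0⁻¹ * ‖w‖ := max_le h1 h2
  have hDu : ‖D u‖ ≤ M' := by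
    have : D u = iteratedFDeriv ℝ k (ffF α) u := iteratedFDerivWithin_of_isOpen k ffOm_open huOm
    rw [this]
    exact le_trans (hM u huT) (le_max_left _ _)
  have key : ‖D (L u)‖ ≤ (c ^ α * c' ^ α) * M' * (m0⁻¹) ^ k := by
    calc ‖D (L u)‖
        = ‖((D (L u)).compContinuousLinearMap fun _ => L).compContinuousLinearMap
            (fun _ => Linv)‖ := by rw [← hT]
      _ ≤ ‖(D (L u)).compContinuousLinearMap fun _ => L‖ * ∏ _i : Fin k, ‖Linv‖ :=
          ContinuousMultilinearMap.norm_compContinuousLinearMap_le _ _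
      _ = ‖(c ^ α * c' ^ α) • D u‖ * ∏ _i : Fin k, ‖Linv‖ := by rw [← hA]
      _ ≤ (c ^ α * c' ^ α) * M' * (m0⁻¹) ^ k := by
          have hns : ‖(c ^ α * c' ^ α) • D u‖ = (c ^ α * c' ^ α) * ‖D u‖ := by
            rw [norm_smul (c ^ α * c' ^ α) (D u), Real.norm_eq_abs,
              abs_of_nonneg (by positivity)]
          rw [hns, Finset.prod_const, Finset.card_univ, Fintype.card_fin]
          gcongr <;> first | positivity | exact hDu | exact hLinv_norm
  -- now convert to the desired bound
  have hfinal : ‖iteratedFDeriv ℝ k (ffF α) (x, y)‖ ≤ (c ^ α * c' ^ α) * M' * (m0⁻¹) ^ k := by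
    have h1 : iteratedFDeriv ℝ k (ffF α) (x, y) = D (L u) := by
      rw [hLu, hD, iteratedFDerivWithin_of_isOpen k ffOm_open ⟨hx, hy⟩]
    rw [h1]; exact key
  refine le_trans hfinal ?_
  -- arithmetic: (c^α c'^α) M' (m0⁻¹)^k ≤ M' R^α m0^(α-k)
  have hcc : c * c' ≤ R * m0 := by
    rcases le_total c c' with h | h
    · rw [hm0, min_eq_left h]; calc c * c' ≤ c * R := by gcongr
        _ = R * c := by ring
    · rw [hm0, min_eq_right h]; calc c * c' = c' * c := by ring
      _ ≤ c' * R := by gcongr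
      _ = R * c' := by ring
  have h2 : c ^ α * c' ^ α ≤ R ^ α * m0 ^ α := by
    rw [← Real.mul_rpow hc0.le hc'0.le, ← Real.mul_rpow (by linarith) hm00.le]
    exact Real.rpow_le_rpow (by positivity) hcc hα
  have h3 : (m0⁻¹ : ℝ) ^ k = m0 ^ (-(k : ℝ)) := by
    rw [Real.rpow_neg hm00.le, Real.rpow_natCast, inv_pow]
  calc (c ^ α * c' ^ α) * M' * (m0⁻¹) ^ k
      ≤ (R ^ α * m0 ^ α) * M' * (m0⁻¹) ^ k := by
        gcongr
    _ = (M' * R ^ α) * (m0 ^ α * m0 ^ (-(k:ℝ))) := by rw [h3]; ring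
    _ = (M' * R ^ α) * m0 ^ (α - k) := by
        rw [← Real.rpow_add hm00, ← sub_eq_add_neg]


lemma telescope_bound {Fv : Type*} [NormedAddCommGroup Fv] [NormedSpace ℝ Fv]
    {G : ℂ × ℂ → Fv} {z p : ℂ × ℂ} {C β : ℝ} (hC : 0 ≤ C) (hβ : 0 < β)
    (hcont : ContinuousAt G z)
    (hder : ∀ t : ℝ, 0 < t → t ≤ 1 → DifferentiableAt ℝ G (z + t • (p - z)) ∧
      ‖fderiv ℝ G (z + t • (p - z))‖ ≤ C * (t * ‖p - z‖) ^ (β - 1)) :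
    ‖G p - G z‖ ≤ C * max 1 (2 ^ (β - 1)) * (1 - (1/2 : ℝ) ^ β)⁻¹ * ‖p - z‖ ^ β := by
  have hr0 : (0:ℝ) ≤ (1/2 : ℝ) ^ β := Real.rpow_nonneg (by norm_num) β
  have hr1 : ((1/2 : ℝ) ^ β) < 1 := Real.rpow_lt_one (by norm_num) (by norm_num) hβ
  have hS : (0:ℝ) < 1 - (1/2:ℝ) ^ β := by linarith
  have hK1 : (1:ℝ) ≤ max 1 (2 ^ (β - 1) : ℝ) := le_max_left _ _
  by_cases hpz : p = z
  · subst hpz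
    simp only [sub_self, norm_zero]
    have : (0:ℝ) ^ β = 0 := Real.zero_rpow hβ.ne'
    rw [this, mul_zero]
  have hd : 0 < ‖p - z‖ := by
    rw [norm_pos_iff, sub_ne_zero]; exact hpz
  set d := ‖p - z‖ with hdd
  set r := ((1/2 : ℝ) ^ β) with hrr
  set K := max 1 (2 ^ (β - 1) : ℝ) with hKK
  have hK0 : 0 ≤ K := le_trans zero_le_one hK1
  set pts : ℕ → ℂ × ℂ := fun j => z + ((1/2 : ℝ)^j) • (p - z) with hpts
  have hpts0 : pts 0 = p := by simp [hpts]
  -- single step estimate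
  have hstep : ∀ j : ℕ, ‖G (pts j) - G (pts (j+1))‖ ≤ (C * K * d ^ β) * r^(j+1) := by
    intro j
    set t₁ := ((1/2:ℝ))^(j+1) with ht₁
    set t₂ := ((1/2:ℝ))^j with ht₂
    have ht₁0 : 0 < t₁ := by positivity
    have ht₂1 : t₂ ≤ 1 := pow_le_one₀ (by norm_num) (by norm_num)
    have ht₁₂ : t₁ ≤ t₂ := by
      rw [ht₁, ht₂, pow_succ]
      nlinarith [pow_pos (by norm_num : (0:ℝ) < 1/2) j]
    have ht21 : t₂ = 2 * t₁ := by rw [ht₁, pow_succ]; ring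
    -- points of the segment
    have hmem : ∀ w ∈ segment ℝ (pts (j+1)) (pts j),
        ∃ t : ℝ, t₁ ≤ t ∧ t ≤ t₂ ∧ w = z + t • (p - z) := by
      intro w hw
      obtain ⟨a, b, ha, hb, hab, hw⟩ := hw
      refine ⟨a * t₁ + b * t₂, by nlinarith, by nlinarith, ?_⟩
      rw [← hw]
      have expand : a • pts (j+1) + b • pts j
          = (a + b) • z + (a * t₁ + b * t₂) • (p - z) := by
        simp only [hpts, ht₁, ht₂]
        module
      rw [expand, hab, one_smul]
    have hbound : ∀ w ∈ segment ℝ (pts (j+1)) (pts j),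
        ‖fderiv ℝ G w‖ ≤ C * K * (t₁ * d) ^ (β - 1) := by
      intro w hw
      obtain ⟨t, htl, htr, rfl⟩ := hmem w hw
      have ht0 : 0 < t := lt_of_lt_of_le ht₁0 htl
      have ht1 : t ≤ 1 := le_trans htr ht₂1
      refine le_trans (hder t ht0 ht1).2 ?_
      rcases le_or_gt 1 β with hβ1 | hβ1
      · -- increasing case
        have h1 : (t * d) ^ (β - 1) ≤ (t₂ * d) ^ (β-1) :=
          Real.rpow_le_rpow (by positivity) (by nlinarith) (by linarith)
        have h2 : (t₂ * d) ^ (β - 1) = 2 ^ (β-1) * (t₁ * d) ^ (β-1) := by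
          rw [ht21, show 2 * t₁ * d = 2 * (t₁ * d) by ring,
            Real.mul_rpow (by norm_num) (by positivity)]
        calc C * (t * d) ^ (β - 1) ≤ C * ((2:ℝ) ^ (β-1) * (t₁ * d) ^ (β-1)) := by
              rw [← h2]; exact mul_le_mul_of_nonneg_left h1 hC
          _ = C * (2:ℝ) ^ (β-1) * (t₁ * d) ^ (β-1) := by ring
          _ ≤ C * K * (t₁ * d) ^ (β - 1) := by
              gcongr
              exact le_max_right _ _
      · -- decreasing case
        have h1 : (t * d) ^ (β - 1) ≤ (t₁ * d) ^ (β-1) :=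
          Real.rpow_le_rpow_of_nonpos (by positivity) (by nlinarith) (by linarith)
        calc C * (t * d) ^ (β - 1) ≤ C * (t₁ * d) ^ (β-1) :=
              mul_le_mul_of_nonneg_left h1 hC
          _ = C * 1 * (t₁ * d) ^ (β-1) := by ring
          _ ≤ C * K * (t₁ * d) ^ (β - 1) := by gcongr
    have hdiffseg : ∀ w ∈ segment ℝ (pts (j+1)) (pts j), DifferentiableAt ℝ G w := by
      intro w hw
      obtain ⟨t, htl, htr, rfl⟩ := hmem w hw
      exact (hder t (lt_of_lt_of_le ht₁0 htl) (le_trans htr ht₂1)).1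
    have hMVT := (convex_segment (pts (j+1)) (pts j)).norm_image_sub_le_of_norm_fderiv_le
      hdiffseg hbound (left_mem_segment ℝ _ _) (right_mem_segment ℝ _ _)
    -- hMVT : ‖G (pts j) - G (pts (j+1))‖ ≤ C*K*(t₁*d)^(β-1) * ‖pts j - pts (j+1)‖
    have hlen : ‖pts j - pts (j+1)‖ = t₁ * d := by
      have : pts j - pts (j+1) = (t₂ - t₁) • (p - z) := by
        simp only [hpts]
        rw [show z + t₂ • (p-z) - (z + t₁ • (p-z)) = (t₂ - t₁) • (p-z) by
          rw [sub_smul]; abel]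
      rw [this, norm_smul, Real.norm_eq_abs, abs_of_nonneg (by linarith), ht21]
      ring
    refine le_trans hMVT ?_
    rw [hlen]
    have htd : 0 < t₁ * d := by positivity
    have e1 : (t₁ * d) ^ (β - 1) * (t₁ * d) = (t₁ * d) ^ β := by
      nth_rewrite 2 [show t₁ * d = (t₁*d) ^ (1:ℝ) by rw [Real.rpow_one]]
      rw [← Real.rpow_add htd, sub_add_cancel]
    have e2 : (t₁ * d) ^ β = r ^ (j+1) * d ^ β := by
      rw [Real.mul_rpow (by positivity) hd.le, hrr, ht₁]
      congr 1
      rw [← Real.rpow_natCast ((1/2:ℝ)) (j+1), ← Real.rpow_natCast ((1/2:ℝ)^β) (j+1),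
        ← Real.rpow_mul (by norm_num), ← Real.rpow_mul (by norm_num)]
      ring_nf
    have efin : C * K * (t₁ * d) ^ (β - 1) * (t₁ * d) = C * K * d ^ β * r ^ (j+1) := by
      rw [show C * K * (t₁ * d) ^ (β - 1) * (t₁ * d)
        = C * K * ((t₁ * d) ^ (β-1) * (t₁ * d)) from by ring, e1, e2]
      ring
    exact le_of_eq efin
  -- partial sums
  have hpartial : ∀ J : ℕ, ‖G p - G (pts J)‖ ≤ (C * K * d ^ β) * ((1 - r)⁻¹) := by
    have hsum : ∀ J : ℕ, ‖G p - G (pts J)‖ ≤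
        ∑ j ∈ Finset.range J, (C * K * d ^ β) * r^(j+1) := by
      intro J
      induction J with
      | zero => simp [hpts0]
      | succ J ih =>
        rw [Finset.sum_range_succ]
        calc ‖G p - G (pts (J+1))‖
            ≤ ‖G p - G (pts J)‖ + ‖G (pts J) - G (pts (J+1))‖ := by
              have : G p - G (pts (J+1)) = (G p - G (pts J)) + (G (pts J) - G (pts (J+1))) := by
                abel
              rw [this]; exact norm_add_le _ _
          _ ≤ _ := by
              exact add_le_add ih (hstep J)
    intro J
    refine le_trans (hsum J) ?_
    have hsum2 : ∑ j ∈ Finset.range J, (C * K * d ^ β) * r^(j+1)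
        = (C * K * d ^ β) * ∑ j ∈ Finset.range J, r^(j+1) := by
      rw [Finset.mul_sum]
    rw [hsum2]
    have hgeo : ∑ j ∈ Finset.range J, r^(j+1) ≤ (1-r)⁻¹ := by
      have h1 : ∑ j ∈ Finset.range J, r^(j+1) = r * ∑ j ∈ Finset.range J, r^j := by
        rw [Finset.mul_sum]
        congr 1; funext j; rw [pow_succ]; ring
      have h2 : ∑ j ∈ Finset.range J, r^j = (1 - r^J)/(1-r) := by
        rw [geom_sum_eq (by intro h; rw [h] at hr1; exact lt_irrefl 1 hr1)]
        rw [show r^J - 1 = -(1 - r^J) by ring, show r - 1 = -(1-r) by ring, neg_div_neg_eq]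
      rw [h1, h2]
      have h3 : (1 - r^J)/(1-r) ≤ (1-r)⁻¹ := by
        rw [div_le_iff₀ hS]
        have : r^J ≥ 0 := pow_nonneg hr0 J
        calc 1 - r^J ≤ 1 := by linarith
          _ = (1-r)⁻¹ * (1-r) := by rw [inv_mul_cancel₀ hS.ne']
      have hrJ : r ^ J ≤ 1 := pow_le_one₀ hr0 hr1.le
      calc r * ((1 - r^J)/(1-r)) ≤ 1 * (1-r)⁻¹ :=
            mul_le_mul (by linarith) h3 (div_nonneg (by linarith) hS.le) (by norm_num)
        _ = (1-r)⁻¹ := by ring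
    have hCKd : 0 ≤ C * K * d ^ β := by positivity
    exact mul_le_mul_of_nonneg_left hgeo hCKd
  -- limit
  have hlim : Tendsto (fun J => G (pts J)) atTop (nhds (G z)) := by
    have h1 : Tendsto (fun J : ℕ => ((1/2:ℝ))^J) atTop (nhds 0) :=
      tendsto_pow_atTop_nhds_zero_of_lt_one (by norm_num) (by norm_num)
    have h2 : Tendsto pts atTop (nhds z) := by
      have h3 : Tendsto (fun J : ℕ => ((1/2:ℝ))^J • (p - z)) atTop (nhds ((0:ℝ) • (p-z))) :=
        h1.smul_const (p - z)
      rw [zero_smul] at h3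
      have := tendsto_const_nhds (x := z) (f := atTop (α := ℕ)) |>.add h3
      rw [add_zero] at this
      exact this
    exact hcont.tendsto.comp h2
  have hlim2 : Tendsto (fun J => ‖G p - G (pts J)‖) atTop (nhds ‖G p - G z‖) :=
    (tendsto_const_nhds.sub hlim).norm
  have hfin := le_of_tendsto hlim2 (Filter.Eventually.of_forall hpartial)
  calc ‖G p - G z‖ ≤ C * K * d ^ β * (1-r)⁻¹ := hfin
    _ = C * K * (1 - r)⁻¹ * d ^ β := by ring


lemma min_le_norm_sub (p q : ℂ × ℂ) :
    min ‖p.1‖ ‖p.2‖ ≤ min ‖q.1‖ ‖q.2‖ + ‖p - q‖ := by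
  have h1 : ‖p.1‖ ≤ ‖q.1‖ + ‖p - q‖ := by
    calc ‖p.1‖ = ‖q.1 + (p.1 - q.1)‖ := by ring_nf
      _ ≤ ‖q.1‖ + ‖p.1 - q.1‖ := norm_add_le _ _
      _ ≤ ‖q.1‖ + ‖p - q‖ := by
          have : ‖p.1 - q.1‖ ≤ ‖p - q‖ := norm_fst_le (p - q)
          linarith
  have h2 : ‖p.2‖ ≤ ‖q.2‖ + ‖p - q‖ := by
    calc ‖p.2‖ = ‖q.2 + (p.2 - q.2)‖ := by ring_nf
      _ ≤ ‖q.2‖ + ‖p.2 - q.2‖ := norm_add_le _ _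
      _ ≤ ‖q.2‖ + ‖p - q‖ := by
          have : ‖p.2 - q.2‖ ≤ ‖p - q‖ := norm_snd_le (p - q)
          linarith
  have h5 : min ‖p.1‖ ‖p.2‖ ≤ ‖q.1‖ + ‖p - q‖ := le_trans (min_le_left _ _) h1
  have h6 : min ‖p.1‖ ‖p.2‖ ≤ ‖q.2‖ + ‖p - q‖ := le_trans (min_le_right _ _) h2
  have h7 : min ‖p.1‖ ‖p.2‖ ≤ min (‖q.1‖ + ‖p - q‖) (‖q.2‖ + ‖p - q‖) := le_min h5 h6
  rwa [min_add_add_right] at h7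

/-- The norm identity between fderiv of iterated derivative and next iterated derivative. -/
lemma norm_fderiv_iter (u : ℂ × ℂ → ℝ) (k : ℕ) (w : ℂ × ℂ) :
    ‖fderiv ℝ (iteratedFDeriv ℝ k u) w‖ = ‖iteratedFDeriv ℝ (k+1) u w‖ := by
  rw [fderiv_iteratedFDeriv]
  simp only [Function.comp_apply, LinearIsometryEquiv.norm_map]

lemma near_bound {α : ℝ} {k : ℕ} {C R : ℝ} (hC : 0 ≤ C) (hβ : 0 < α - (k:ℝ))
    (hcont : Continuous (iteratedFDeriv ℝ k (ffF α)))
    (hzero : ∀ z : ℂ × ℂ, z.1 = 0 ∨ z.2 = 0 → iteratedFDeriv ℝ k (ffF α) z = 0)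
    (hder : ∀ w : ℂ × ℂ, w.1 ≠ 0 → w.2 ≠ 0 → ‖w‖ < R →
      DifferentiableAt ℝ (iteratedFDeriv ℝ k (ffF α)) w ∧
      ‖iteratedFDeriv ℝ (k+1) (ffF α) w‖ ≤ C * (min ‖w.1‖ ‖w.2‖) ^ (α - k - 1)) :
    ∀ p : ℂ × ℂ, ‖p‖ < R →
      ‖iteratedFDeriv ℝ k (ffF α) p‖ ≤
        (C * max 1 (2 ^ (α - k - 1)) * (1 - (1/2 : ℝ) ^ (α - k))⁻¹) *
          (min ‖p.1‖ ‖p.2‖) ^ (α - k) := by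
  intro p hpR
  set G := iteratedFDeriv ℝ k (ffF α) with hG
  set Cfin := C * max 1 (2 ^ (α - k - 1)) * (1 - (1/2 : ℝ) ^ (α - k))⁻¹ with hCfin
  have hr1 : ((1/2 : ℝ) ^ (α - k)) < 1 := Real.rpow_lt_one (by norm_num) (by norm_num) hβ
  have hCfin0 : 0 ≤ Cfin := by
    apply mul_nonneg (mul_nonneg hC (le_trans zero_le_one (le_max_left _ _)))
    rw [inv_nonneg]; linarith
  by_cases hp : p.1 = 0 ∨ p.2 = 0
  · rw [hzero p hp, norm_zero]
    positivity
  push_neg at hp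
  obtain ⟨hp1, hp2⟩ := hp
  -- two symmetric cases
  rcases le_total ‖p.1‖ ‖p.2‖ with hxy | hxy
  · -- z = (0, p.2)
    set z : ℂ × ℂ := (0, p.2) with hz
    have hpz : p - z = (p.1, 0) := by simp [hz, Prod.ext_iff]
    have hpznorm : ‖p - z‖ = min ‖p.1‖ ‖p.2‖ := by
      rw [hpz, min_eq_left hxy, Prod.norm_def]
      simp
    have hseg : ∀ t : ℝ, z + t • (p - z) = (t • p.1, p.2) := by
      intro t
      rw [hpz]
      simp [hz, Prod.ext_iff]
    have htel := telescope_bound (G := G) (z := z) (p := p) hC hβ hcont.continuousAt ?_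
    · rw [hzero z (Or.inl rfl), sub_zero, hpznorm] at htel
      exact htel
    · intro t ht0 ht1
      rw [hseg t]
      have hw1 : (t • p.1 : ℂ) ≠ 0 := smul_ne_zero (ne_of_gt ht0) hp1
      have hwnorm1 : ‖t • p.1‖ = t * ‖p.1‖ := by
        rw [norm_smul, Real.norm_eq_abs, abs_of_pos ht0]
      have hwR : ‖((t • p.1 : ℂ), p.2)‖ < R := by
        refine lt_of_le_of_lt ?_ hpR
        rw [Prod.norm_def, Prod.norm_def]
        refine max_le_max ?_ le_rfl
        rw [hwnorm1]
        nlinarith [norm_nonneg p.1]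
      obtain ⟨hdiff, hbd⟩ := hder (t • p.1, p.2) hw1 hp2 hwR
      refine ⟨hdiff, ?_⟩
      rw [norm_fderiv_iter]
      refine le_trans hbd ?_
      have hmin : min ‖(t • p.1 : ℂ)‖ ‖p.2‖ = t * ‖p - z‖ := by
        rw [hwnorm1, hpznorm, min_eq_left hxy, min_eq_left]
        nlinarith [norm_nonneg p.1]
      rw [hmin]
  · -- z = (p.1, 0)
    set z : ℂ × ℂ := (p.1, 0) with hz
    have hpz : p - z = (0, p.2) := by simp [hz, Prod.ext_iff]
    have hpznorm : ‖p - z‖ = min ‖p.1‖ ‖p.2‖ := by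
      rw [hpz, min_eq_right hxy, Prod.norm_def]
      simp
    have hseg : ∀ t : ℝ, z + t • (p - z) = (p.1, t • p.2) := by
      intro t
      rw [hpz]
      simp [hz, Prod.ext_iff]
    have htel := telescope_bound (G := G) (z := z) (p := p) hC hβ hcont.continuousAt ?_
    · rw [hzero z (Or.inr rfl), sub_zero, hpznorm] at htel
      exact htel
    · intro t ht0 ht1
      rw [hseg t]
      have hw2 : (t • p.2 : ℂ) ≠ 0 := smul_ne_zero (ne_of_gt ht0) hp2
      have hwnorm2 : ‖t • p.2‖ = t * ‖p.2‖ := by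
        rw [norm_smul, Real.norm_eq_abs, abs_of_pos ht0]
      have hwR : ‖(p.1, (t • p.2 : ℂ))‖ < R := by
        refine lt_of_le_of_lt ?_ hpR
        rw [Prod.norm_def, Prod.norm_def]
        refine max_le_max le_rfl ?_
        rw [hwnorm2]
        nlinarith [norm_nonneg p.2]
      obtain ⟨hdiff, hbd⟩ := hder (p.1, t • p.2) hp1 hw2 hwR
      refine ⟨hdiff, ?_⟩
      rw [norm_fderiv_iter]
      refine le_trans hbd ?_
      have hmin : min ‖p.1‖ ‖(t • p.2 : ℂ)‖ = t * ‖p - z‖ := by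
        rw [hwnorm2, hpznorm, min_eq_right hxy, min_eq_right]
        nlinarith [norm_nonneg p.2]
      rw [hmin]


/-- The `near`-type bound, packaged: from continuity + vanishing at level `k` we get a
pointwise bound on `iteratedFDeriv k` near the singular set, valid on a ball. -/
lemma ff_near (α : ℝ) (hα0 : 0 < α) (k : ℕ) (hβ : 0 < α - (k:ℝ))
    (hc : Continuous (iteratedFDeriv ℝ k (ffF α)))
    (hz0 : ∀ z : ℂ × ℂ, z.1 = 0 ∨ z.2 = 0 → iteratedFDeriv ℝ k (ffF α) z = 0)
    {R : ℝ} (hR : 1 ≤ R) :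
    ∃ C', 0 ≤ C' ∧ ∀ p : ℂ × ℂ, ‖p‖ < R →
      ‖iteratedFDeriv ℝ k (ffF α) p‖ ≤ C' * (min ‖p.1‖ ‖p.2‖) ^ (α - k) := by
  obtain ⟨C, hC0, hCb⟩ := ffF_bound α hα0.le (k+1) hR
  have hr1 : ((1/2 : ℝ) ^ (α - (k:ℝ))) < 1 := Real.rpow_lt_one (by norm_num) (by norm_num) hβ
  refine ⟨C * max 1 (2 ^ (α - (k:ℝ) - 1)) * (1 - (1/2 : ℝ) ^ (α - (k:ℝ)))⁻¹, ?_, ?_⟩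
  · apply mul_nonneg (mul_nonneg hC0 (le_trans zero_le_one (le_max_left _ _)))
    rw [inv_nonneg]; linarith
  refine near_bound hC0 hβ hc hz0 ?_
  intro w hw1 hw2 hwR
  refine ⟨diffAt_of_open ffOm_open (ffF_smooth α (k+1)) (Nat.lt_succ_self k) ⟨hw1, hw2⟩, ?_⟩
  have h1 := hCb w.1 w.2 hw1 hw2 (le_of_lt (lt_of_le_of_lt (norm_fst_le w) hwR))
    (le_of_lt (lt_of_le_of_lt (norm_snd_le w) hwR))
  have hexp : α - ((k+1 : ℕ) : ℝ) = α - (k:ℝ) - 1 := by push_cast; ring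
  rw [hexp] at h1
  simpa using h1

end AbsPowAux

/-- For every `n ∈ ℕ`, the function `(x,y) ↦ |xy|^{(2n+1)/2}` on `ℂ²` is `C^n`
in the real sense, and its `n`-th iterated derivative is `1/2`-Hölder continuous
on every compact set; i.e. `|xy|^{(2n+1)/2} ∈ C^{n,1/2}_loc(ℂ²)`. -/
theorem absPow_prod_contDiff_and_holder (n : ℕ) :
    ContDiff ℝ n (fun p : ℂ × ℂ => ‖p.1 * p.2‖ ^ ((2 * (n : ℝ) + 1) / 2)) ∧
    ∀ K : Set (ℂ × ℂ), IsCompact K → ∃ C : ℝ, 0 ≤ C ∧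
      ∀ p ∈ K, ∀ q ∈ K,
        ‖iteratedFDeriv ℝ n (fun p : ℂ × ℂ => ‖p.1 * p.2‖ ^ ((2 * (n : ℝ) + 1) / 2)) p
          - iteratedFDeriv ℝ n (fun p : ℂ × ℂ => ‖p.1 * p.2‖ ^ ((2 * (n : ℝ) + 1) / 2)) q‖
        ≤ C * ‖p - q‖ ^ ((1 : ℝ) / 2) := by
  set α : ℝ := (2 * (n : ℝ) + 1) / 2 with hα
  have hαn : α = (n : ℝ) + 1/2 := by rw [hα]; ring
  have hα0 : 0 < α := by rw [hαn]; positivity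
  have hfeq : (fun p : ℂ × ℂ => ‖p.1 * p.2‖ ^ α) = ffF α := by
    funext p
    rw [norm_mul, Real.mul_rpow (norm_nonneg _) (norm_nonneg _)]
    rfl
  rw [hfeq]
  -- the inductive step
  have step : ∀ m : ℕ, m < n →
      (Continuous (iteratedFDeriv ℝ m (ffF α)) ∧
        ∀ z : ℂ × ℂ, z.1 = 0 ∨ z.2 = 0 → iteratedFDeriv ℝ m (ffF α) z = 0) →
      Differentiable ℝ (iteratedFDeriv ℝ m (ffF α)) ∧
      (Continuous (iteratedFDeriv ℝ (m+1) (ffF α)) ∧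
        ∀ z : ℂ × ℂ, z.1 = 0 ∨ z.2 = 0 → iteratedFDeriv ℝ (m+1) (ffF α) z = 0) := by
    intro m hm ⟨hc, hz0⟩
    have hmn : (m : ℝ) + 1 ≤ (n : ℝ) := by exact_mod_cast hm
    have hβ : 0 < α - (m:ℝ) := by rw [hαn]; linarith
    have hβ1 : 1 < α - (m:ℝ) := by rw [hαn]; linarith
    -- derivative 0 at singular points
    have hzder : ∀ z₀ : ℂ × ℂ, z₀.1 = 0 ∨ z₀.2 = 0 →
        HasFDerivAt (iteratedFDeriv ℝ m (ffF α))
          (0 : (ℂ × ℂ) →L[ℝ] ContinuousMultilinearMap ℝ (fun _ : Fin m => ℂ × ℂ) ℝ) z₀ := by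
      intro z₀ hzz
      obtain ⟨C', hC'0, hC'b⟩ := ff_near α hα0 m hβ hc hz0
        (R := ‖z₀‖ + 2) (by linarith [norm_nonneg z₀])
      rw [hasFDerivAt_iff_tendsto]
      have hGz : iteratedFDeriv ℝ m (ffF α) z₀ = 0 := hz0 z₀ hzz
      have hzmin : min ‖z₀.1‖ ‖z₀.2‖ = 0 := by
        rcases hzz with h | h
        · rw [h, norm_zero]; exact min_eq_left (norm_nonneg _)
        · rw [h, norm_zero]; exact min_eq_right (norm_nonneg _)
      simp only [hGz, sub_zero, ContinuousLinearMap.zero_apply]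
      apply squeeze_zero_norm' (a := fun p : ℂ × ℂ => C' * ‖p - z₀‖ ^ (α - (m:ℝ) - 1))
      · filter_upwards [Metric.ball_mem_nhds z₀ one_pos] with p hp
        have hp1 : ‖p - z₀‖ < 1 := by rwa [mem_ball, dist_eq_norm] at hp
        have hpR : ‖p‖ < ‖z₀‖ + 2 := by
          have : ‖p‖ ≤ ‖z₀‖ + ‖p - z₀‖ := by
            calc ‖p‖ = ‖z₀ + (p - z₀)‖ := by ring_nf
              _ ≤ ‖z₀‖ + ‖p - z₀‖ := norm_add_le _ _
          linarith
        have hminle : min ‖p.1‖ ‖p.2‖ ≤ ‖p - z₀‖ := by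
          have := min_le_norm_sub p z₀
          rw [hzmin] at this
          linarith
        have hb := hC'b p hpR
        rw [Real.norm_eq_abs, abs_of_nonneg (by positivity)]
        by_cases hpz : p = z₀
        · rw [hpz]
          simp only [sub_self, norm_zero, hGz]
          rw [inv_zero, zero_mul]
          positivity
        · have hd0 : 0 < ‖p - z₀‖ := by rw [norm_pos_iff, sub_ne_zero]; exact hpz
          have hstep1 : ‖iteratedFDeriv ℝ m (ffF α) p‖ ≤ C' * ‖p - z₀‖ ^ (α - (m:ℝ)) := by
            refine le_trans hb ?_
            exact mul_le_mul_of_nonneg_left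
              (Real.rpow_le_rpow (by positivity) hminle hβ.le) hC'0
          calc ‖p - z₀‖⁻¹ * ‖iteratedFDeriv ℝ m (ffF α) p‖
              ≤ ‖p - z₀‖⁻¹ * (C' * ‖p - z₀‖ ^ (α - (m:ℝ))) :=
                mul_le_mul_of_nonneg_left hstep1 (by positivity)
            _ = C' * ‖p - z₀‖ ^ (α - (m:ℝ) - 1) := by
                have e1 : ‖p - z₀‖ ^ (α - (m:ℝ))
                    = ‖p - z₀‖ ^ (α - (m:ℝ) - 1) * ‖p - z₀‖ := by
                  rw [← Real.rpow_add_one hd0.ne' (α - (m:ℝ) - 1)]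
                  congr 1
                  ring
                rw [e1, show ‖p - z₀‖⁻¹ * (C' * (‖p - z₀‖ ^ (α - (m:ℝ) - 1) * ‖p - z₀‖))
                  = C' * ‖p - z₀‖ ^ (α - (m:ℝ) - 1) * (‖p - z₀‖⁻¹ * ‖p - z₀‖) by ring,
                  inv_mul_cancel₀ hd0.ne', mul_one]
      · have h1 : Tendsto (fun p : ℂ × ℂ => ‖p - z₀‖) (nhds z₀) (nhds 0) :=
          tendsto_norm_sub_self z₀
        have h2 : Tendsto (fun t : ℝ => t ^ (α - (m:ℝ) - 1)) (nhds 0) (nhds 0) := by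
          have h3 := (Real.continuousAt_rpow_const 0 (α - (m:ℝ) - 1)
            (Or.inr (by linarith))).tendsto
          rwa [Real.zero_rpow (by linarith : α - (m:ℝ) - 1 ≠ 0)] at h3
        have := (h2.comp h1).const_mul C'
        simpa using this
    have hdiffall : Differentiable ℝ (iteratedFDeriv ℝ m (ffF α)) := by
      intro p
      by_cases hp : p.1 = 0 ∨ p.2 = 0
      · exact (hzder p hp).differentiableAt
      · push_neg at hp
        exact diffAt_of_open ffOm_open (ffF_smooth α (m+1)) (Nat.lt_succ_self m) hp
    have hz1 : ∀ z₀ : ℂ × ℂ, z₀.1 = 0 ∨ z₀.2 = 0 →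
        iteratedFDeriv ℝ (m+1) (ffF α) z₀ = 0 := by
      intro z₀ hzz
      have h0 : fderiv ℝ (iteratedFDeriv ℝ m (ffF α)) z₀ = 0 := (hzder z₀ hzz).fderiv
      have h1 := congrFun (iteratedFDeriv_succ_eq_comp_left (𝕜 := ℝ) (f := ffF α)
        (n := m) (E := ℂ × ℂ) (F := ℝ)) z₀
      rw [h1, Function.comp_apply, h0]
      exact LinearIsometryEquiv.map_zero _
    have hcont1 : Continuous (iteratedFDeriv ℝ (m+1) (ffF α)) := by
      rw [continuous_iff_continuousAt]
      intro p
      by_cases hp : p.1 = 0 ∨ p.2 = 0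
      · have h0 : iteratedFDeriv ℝ (m+1) (ffF α) p = 0 := hz1 p hp
        have hpmin : min ‖p.1‖ ‖p.2‖ = 0 := by
          rcases hp with h | h
          · rw [h, norm_zero]; exact min_eq_left (norm_nonneg _)
          · rw [h, norm_zero]; exact min_eq_right (norm_nonneg _)
        rw [ContinuousAt, h0]
        obtain ⟨C, hC0, hCb⟩ := ffF_bound α hα0.le (m+1)
          (R := ‖p‖ + 2) (by linarith [norm_nonneg p])
        apply squeeze_zero_norm' (a := fun q : ℂ × ℂ => C * ‖q - p‖ ^ (α - (m:ℝ) - 1))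
        · filter_upwards [Metric.ball_mem_nhds p one_pos] with q hq
          by_cases hqz : q.1 = 0 ∨ q.2 = 0
          · rw [hz1 q hqz, norm_zero]
            positivity
          · push_neg at hqz
            have hq1 : ‖q - p‖ < 1 := by rwa [mem_ball, dist_eq_norm] at hq
            have hqR : ‖q‖ < ‖p‖ + 2 := by
              have : ‖q‖ ≤ ‖p‖ + ‖q - p‖ := by
                calc ‖q‖ = ‖p + (q - p)‖ := by ring_nf
                  _ ≤ ‖p‖ + ‖q - p‖ := norm_add_le _ _
              linarith
            have hb := hCb q.1 q.2 hqz.1 hqz.2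
              (le_of_lt (lt_of_le_of_lt (norm_fst_le q) hqR))
              (le_of_lt (lt_of_le_of_lt (norm_snd_le q) hqR))
            have hexp : α - ((m+1 : ℕ) : ℝ) = α - (m:ℝ) - 1 := by push_cast; ring
            rw [hexp] at hb
            have hminle : min ‖q.1‖ ‖q.2‖ ≤ ‖q - p‖ := by
              have := min_le_norm_sub q p
              rw [hpmin] at this
              linarith
            have h2 : (min ‖q.1‖ ‖q.2‖) ^ (α - (m:ℝ) - 1) ≤ ‖q - p‖ ^ (α - (m:ℝ) - 1) :=
              Real.rpow_le_rpow (by positivity) hminle (by linarith)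
            calc ‖iteratedFDeriv ℝ (m+1) (ffF α) q‖
                ≤ C * (min ‖q.1‖ ‖q.2‖) ^ (α - (m:ℝ) - 1) := by simpa using hb
              _ ≤ C * ‖q - p‖ ^ (α - (m:ℝ) - 1) := mul_le_mul_of_nonneg_left h2 hC0
        · have h1 : Tendsto (fun q : ℂ × ℂ => ‖q - p‖) (nhds p) (nhds 0) :=
            tendsto_norm_sub_self p
          have h2 : Tendsto (fun t : ℝ => t ^ (α - (m:ℝ) - 1)) (nhds 0) (nhds 0) := by
            have h3 := (Real.continuousAt_rpow_const 0 (α - (m:ℝ) - 1)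
              (Or.inr (by linarith))).tendsto
            rwa [Real.zero_rpow (by linarith : α - (m:ℝ) - 1 ≠ 0)] at h3
          have := (h2.comp h1).const_mul C
          simpa using this
      · push_neg at hp
        exact contAt_of_open ffOm_open (ffF_smooth α (m+2)) (Nat.le_succ _) hp
    exact ⟨hdiffall, hcont1, hz1⟩
  -- base case
  have base : Continuous (iteratedFDeriv ℝ 0 (ffF α)) ∧
      ∀ z : ℂ × ℂ, z.1 = 0 ∨ z.2 = 0 → iteratedFDeriv ℝ 0 (ffF α) z = 0 := by
    constructor
    · rw [iteratedFDeriv_zero_eq_comp]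
      exact (LinearIsometryEquiv.continuous _).comp (ffF_cont α hα0.le)
    · intro z hz
      have h0 : ffF α z = 0 := by
        rcases hz with h | h
        · show ‖z.1‖ ^ α * ‖z.2‖ ^ α = 0
          rw [h, norm_zero, Real.zero_rpow hα0.ne', zero_mul]
        · show ‖z.1‖ ^ α * ‖z.2‖ ^ α = 0
          rw [h, norm_zero, Real.zero_rpow hα0.ne', mul_zero]
      have h1 : ‖iteratedFDeriv ℝ 0 (ffF α) z‖ = 0 := by
        rw [norm_iteratedFDeriv_zero, h0, norm_zero]
      exact norm_eq_zero.1 h1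
  -- the main induction
  have main : ∀ m : ℕ, m ≤ n →
      Continuous (iteratedFDeriv ℝ m (ffF α)) ∧
        ∀ z : ℂ × ℂ, z.1 = 0 ∨ z.2 = 0 → iteratedFDeriv ℝ m (ffF α) z = 0 := by
    intro m
    induction m with
    | zero => intro _; exact base
    | succ m ih =>
      intro hm
      have hmn : m < n := lt_of_lt_of_le (Nat.lt_succ_self m) hm
      exact (step m hmn (ih hmn.le)).2
  have hdiff : ∀ m : ℕ, m < n → Differentiable ℝ (iteratedFDeriv ℝ m (ffF α)) :=
    fun m hm => (step m hm (main m hm.le)).1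
  constructor
  · exact contDiff_nat_iff_continuous_differentiable.2
      ⟨fun m hm => (main m hm).1, fun m hm => hdiff m hm⟩
  -- Hölder part
  intro K hK
  obtain ⟨r, hr⟩ := (isBounded_iff_subset_closedBall (0 : ℂ × ℂ)).1 hK.isBounded
  set R : ℝ := max r 0 + 1 with hR
  have hR1 : 1 ≤ R := by rw [hR]; have := le_max_right r 0; linarith
  have hKR : ∀ p ∈ K, ‖p‖ < R := by
    intro p hp
    have := hr hp
    rw [mem_closedBall, dist_zero_right] at this
    have h2 := le_max_left r 0
    rw [hR]; linarith
  obtain ⟨C1, hC10, hC1b⟩ := ffF_bound α hα0.le (n+1) hR1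
  have hβn : 0 < α - (n:ℝ) := by rw [hαn]; norm_num
  obtain ⟨C2, hC20, hC2b⟩ := ff_near α hα0 n hβn (main n le_rfl).1 (main n le_rfl).2 hR1
  have hexp1 : α - (n:ℝ) = 1/2 := by rw [hαn]; ring
  have hexp2 : α - ((n+1 : ℕ):ℝ) = -(1/2) := by rw [hαn]; push_cast; ring
  refine ⟨C1 + 4 * C2, by linarith, ?_⟩
  intro p hp q hq
  set D := ‖p - q‖ with hD
  have hD0 : 0 ≤ D := norm_nonneg _
  by_cases hD00 : D = 0
  · have hpq : p = q := by
      rw [← sub_eq_zero]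
      exact norm_eq_zero.1 hD00
    rw [hpq, sub_self, norm_zero, hD00, Real.zero_rpow (by norm_num : ((1:ℝ)/2) ≠ 0), mul_zero]
  have hDpos : 0 < D := lt_of_le_of_ne hD0 (Ne.symm hD00)
  have hDhalf : 0 ≤ D ^ ((1:ℝ)/2) := Real.rpow_nonneg hD0 _
  by_cases hcase : 2 * D ≤ min ‖p.1‖ ‖p.2‖
  · -- MVT case
    have hsegsub : segment ℝ q p ⊆ ball (0 : ℂ × ℂ) R :=
      (convex_ball (0 : ℂ × ℂ) R).segment_subset (by rw [mem_ball, dist_zero_right]; exact hKR q hq)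
        (by rw [mem_ball, dist_zero_right]; exact hKR p hp)
    have hwfacts : ∀ w ∈ segment ℝ q p, ‖w‖ < R ∧ D ≤ min ‖w.1‖ ‖w.2‖ := by
      intro w hw
      have hwball := hsegsub hw
      rw [mem_ball, dist_zero_right] at hwball
      refine ⟨hwball, ?_⟩
      obtain ⟨a, b, ha, hb, hab, hw'⟩ := hw
      have hwp : w - p = a • (q - p) := by
        rw [← hw', show b = 1 - a by linarith]
        module
      have hwpn : ‖w - p‖ ≤ D := by
        rw [hwp, norm_smul, Real.norm_eq_abs, abs_of_nonneg ha, norm_sub_rev, ← hD]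
        nlinarith
      have := min_le_norm_sub p w
      have hpw : ‖p - w‖ = ‖w - p‖ := norm_sub_rev _ _
      linarith
    have hMVT := (convex_segment q p).norm_image_sub_le_of_norm_fderiv_le
      (f := iteratedFDeriv ℝ n (ffF α)) (C := C1 * D ^ (-(1/2) : ℝ))
      (fun w hw => by
        obtain ⟨hwR, hwmin⟩ := hwfacts w hw
        have hw1 : w.1 ≠ 0 := by
          intro h
          rw [h, norm_zero] at hwmin
          have := min_le_left (0:ℝ) ‖w.2‖
          nlinarith
        have hw2 : w.2 ≠ 0 := by
          intro h
          rw [h, norm_zero] at hwmin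
          have := min_le_right ‖w.1‖ (0:ℝ)
          nlinarith
        exact diffAt_of_open ffOm_open (ffF_smooth α (n+1)) (Nat.lt_succ_self n) ⟨hw1, hw2⟩)
      (fun w hw => by
        obtain ⟨hwR, hwmin⟩ := hwfacts w hw
        have hw1 : w.1 ≠ 0 := by
          intro h
          rw [h, norm_zero] at hwmin
          have := min_le_left (0:ℝ) ‖w.2‖
          nlinarith
        have hw2 : w.2 ≠ 0 := by
          intro h
          rw [h, norm_zero] at hwmin
          have := min_le_right ‖w.1‖ (0:ℝ)
          nlinarith
        rw [norm_fderiv_iter]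
        have hb := hC1b w.1 w.2 hw1 hw2 (le_of_lt (lt_of_le_of_lt (norm_fst_le w) hwR))
          (le_of_lt (lt_of_le_of_lt (norm_snd_le w) hwR))
        rw [hexp2] at hb
        have hb' : ‖iteratedFDeriv ℝ (n+1) (ffF α) w‖
            ≤ C1 * (min ‖w.1‖ ‖w.2‖) ^ (-(1/2) : ℝ) := by simpa using hb
        refine le_trans hb' ?_
        refine mul_le_mul_of_nonneg_left ?_ hC10
        exact Real.rpow_le_rpow_of_nonpos hDpos hwmin (by norm_num))
      (left_mem_segment ℝ q p) (right_mem_segment ℝ q p)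
    -- hMVT : ‖G p - G q‖ ≤ C1 * D^(-1/2) * ‖p - q‖
    refine le_trans hMVT ?_
    have : C1 * D ^ (-(1/2) : ℝ) * ‖p - q‖ = C1 * D ^ ((1:ℝ)/2) := by
      rw [← hD, show ((1:ℝ)/2) = -(1/2) + 1 by ring, Real.rpow_add hDpos, Real.rpow_one]
      ring
    rw [this]
    have : 0 ≤ D ^ (-(1/2) + 1 : ℝ) := Real.rpow_nonneg hD0 _
    nlinarith [Real.rpow_nonneg hD0 ((1:ℝ)/2)]
  · -- near-singular case
    push_neg at hcase
    have hminq : min ‖q.1‖ ‖q.2‖ ≤ min ‖p.1‖ ‖p.2‖ + D := by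
      have := min_le_norm_sub q p
      rw [norm_sub_rev, ← hD] at this
      linarith
    have h4half : ((4:ℝ)) ^ ((1:ℝ)/2) = 2 := by
      rw [show (4:ℝ) = 2^(2:ℕ) by norm_num, ← Real.rpow_natCast (2:ℝ) 2,
        ← Real.rpow_mul (by norm_num : (0:ℝ) ≤ 2)]
      norm_num
    have hbp : ‖iteratedFDeriv ℝ n (ffF α) p‖ ≤ C2 * (2 * D) ^ ((1:ℝ)/2) := by
      refine le_trans (hC2b p (hKR p hp)) ?_
      rw [hexp1]
      exact mul_le_mul_of_nonneg_left
        (Real.rpow_le_rpow (by positivity) hcase.le (by norm_num)) hC20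
    have hbq : ‖iteratedFDeriv ℝ n (ffF α) q‖ ≤ C2 * (3 * D) ^ ((1:ℝ)/2) := by
      refine le_trans (hC2b q (hKR q hq)) ?_
      rw [hexp1]
      exact mul_le_mul_of_nonneg_left
        (Real.rpow_le_rpow (by positivity) (by linarith) (by norm_num)) hC20
    have h2D : (2 * D) ^ ((1:ℝ)/2) ≤ 2 * D ^ ((1:ℝ)/2) := by
      rw [Real.mul_rpow (by norm_num) hD0]
      have : (2:ℝ) ^ ((1:ℝ)/2) ≤ 2 := by
        calc (2:ℝ) ^ ((1:ℝ)/2) ≤ (2:ℝ) ^ (1:ℝ) :=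
              Real.rpow_le_rpow_of_exponent_le (by norm_num) (by norm_num)
          _ = 2 := Real.rpow_one 2
      nlinarith
    have h3D : (3 * D) ^ ((1:ℝ)/2) ≤ 2 * D ^ ((1:ℝ)/2) := by
      calc (3 * D) ^ ((1:ℝ)/2) ≤ (4 * D) ^ ((1:ℝ)/2) :=
            Real.rpow_le_rpow (by positivity) (by linarith) (by norm_num)
        _ = 2 * D ^ ((1:ℝ)/2) := by
            rw [Real.mul_rpow (by norm_num) hD0, h4half]
    calc ‖iteratedFDeriv ℝ n (ffF α) p - iteratedFDeriv ℝ n (ffF α) q‖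
        ≤ ‖iteratedFDeriv ℝ n (ffF α) p‖ + ‖iteratedFDeriv ℝ n (ffF α) q‖ := norm_sub_le _ _
      _ ≤ C2 * (2 * D) ^ ((1:ℝ)/2) + C2 * (3 * D) ^ ((1:ℝ)/2) := add_le_add hbp hbq
      _ ≤ C2 * (2 * D ^ ((1:ℝ)/2)) + C2 * (2 * D ^ ((1:ℝ)/2)) :=
          add_le_add (mul_le_mul_of_nonneg_left h2D hC20)
            (mul_le_mul_of_nonneg_left h3D hC20)
      _ = 4 * C2 * D ^ ((1:ℝ)/2) := by ring
      _ ≤ (C1 + 4 * C2) * D ^ ((1:ℝ)/2) := by nlinarith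
end

section
/- For every n ∈ ℕ, the function f : ℂ × ℂ → ℝ given by f(x,y) = |x·y|^{(2n+1)/2} is not infinitely differentiable in the real sense on ℂ²; that is, ¬ ContDiff ℝ ∞ f. -/
open Real Filter Set Topology

private lemma tendsto_abs_rpow_zero {β : ℝ} (hβ : 0 < β) :
    Tendsto (fun t : ℝ => |t| ^ β) (𝓝 0) (𝓝 0) := by
  have h : ContinuousAt (fun x : ℝ => x ^ β) (|0| : ℝ) := by
    simpa using Real.continuousAt_rpow_const 0 β (Or.inr hβ.le)
  have := h.comp (continuous_abs.continuousAt (x := (0 : ℝ)))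
  simpa [ContinuousAt, Function.comp_def, Real.zero_rpow hβ.ne'] using this

private lemma abs_rpow_succ {β t : ℝ} (ht : t ≠ 0) :
    |t| ^ β = |t| * |t| ^ (β - 1) := by
  have habs : (0:ℝ) < |t| := abs_pos.2 ht
  conv_lhs => rw [show β = 1 + (β - 1) by ring]
  rw [Real.rpow_add habs, Real.rpow_one]

private lemma hasDerivAt_A {β : ℝ} (hβ : 0 < β) (t : ℝ) :
    HasDerivAt (fun s : ℝ => |s| ^ (β + 1)) ((β + 1) * (t * |t| ^ (β - 1))) t := by
  rcases eq_or_ne t 0 with rfl | ht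
  · rw [hasDerivAt_iff_tendsto_slope]
    have h0 : (β + 1) * ((0:ℝ) * |(0:ℝ)| ^ (β - 1)) = 0 := by ring
    rw [h0]
    apply squeeze_zero_norm' (a := fun s : ℝ => |s| ^ β)
    · filter_upwards [self_mem_nhdsWithin] with s hs
      have hs' : s ≠ 0 := hs
      have habs : (0:ℝ) < |s| := abs_pos.2 hs'
      have h1 : slope (fun s : ℝ => |s| ^ (β + 1)) 0 s = |s| ^ (β + 1) / s := by
        simp [slope_def_field, Real.zero_rpow (by positivity : β + 1 ≠ 0)]
      rw [h1, Real.norm_eq_abs, abs_div,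
        abs_of_nonneg (Real.rpow_nonneg (abs_nonneg s) _),
        Real.rpow_add habs, Real.rpow_one, mul_div_assoc, div_self habs.ne', mul_one]
    · exact (tendsto_abs_rpow_zero hβ).mono_left nhdsWithin_le_nhds
  · have h1 := hasDerivAt_abs ht
    have h2 : HasDerivAt (fun x : ℝ => x ^ (β + 1)) ((β + 1) * |t| ^ (β + 1 - 1)) |t| :=
      Real.hasDerivAt_rpow_const (Or.inl (abs_ne_zero.2 ht))
    have h3 := h2.comp t h1
    refine h3.congr_deriv ?_
    rw [add_sub_cancel_right, abs_rpow_succ (β := β) ht]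
    linear_combination -((-(β + 1) * |t| ^ (β - 1)) * (abs_mul_sign t))

private lemma hasDerivAt_B {β : ℝ} (hβ : 0 < β) (t : ℝ) :
    HasDerivAt (fun s : ℝ => s * |s| ^ β) ((β + 1) * |t| ^ β) t := by
  rcases eq_or_ne t 0 with rfl | ht
  · rw [hasDerivAt_iff_tendsto_slope]
    have h0 : (β + 1) * |(0:ℝ)| ^ β = 0 := by
      rw [abs_zero, Real.zero_rpow hβ.ne', mul_zero]
    rw [h0]
    apply squeeze_zero_norm' (a := fun s : ℝ => |s| ^ β)
    · filter_upwards [self_mem_nhdsWithin] with s hs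
      have hs' : s ≠ 0 := hs
      have h1 : slope (fun s : ℝ => s * |s| ^ β) 0 s = |s| ^ β := by
        rw [slope_def_field]; simp only [zero_mul, sub_zero]; field_simp
      rw [h1, Real.norm_eq_abs, abs_of_nonneg (Real.rpow_nonneg (abs_nonneg s) _)]
    · exact (tendsto_abs_rpow_zero hβ).mono_left nhdsWithin_le_nhds
  · have h1 := hasDerivAt_abs ht
    have h2 : HasDerivAt (fun x : ℝ => x ^ β) (β * |t| ^ (β - 1)) |t| :=
      Real.hasDerivAt_rpow_const (Or.inl (abs_ne_zero.2 ht))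
    have h3 := (hasDerivAt_id t).mul (h2.comp t h1)
    refine h3.congr_deriv ?_
    have h4 : |t| ^ β = |t| * |t| ^ (β - 1) := abs_rpow_succ ht
    simp only [Function.comp_apply, id_eq, one_mul]
    linear_combination -(β * h4 - (β * |t| ^ (β - 1)) * (self_mul_sign t))

private lemma not_diffAt_sqrtlike {f : ℝ → ℝ} (hf0 : f 0 = 0)
    (hf : ∀ s : ℝ, 0 < s → f s = s ^ (1/2 : ℝ)) : ¬ DifferentiableAt ℝ f 0 := by
  intro h
  have hd := h.hasDerivAt
  rw [hasDerivAt_iff_tendsto_slope] at hd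
  have hle : 𝓝[>] (0:ℝ) ≤ 𝓝[≠] (0:ℝ) := nhdsWithin_mono _ fun s hs => ne_of_gt hs
  have hd' : Tendsto (slope f 0) (𝓝[>] (0:ℝ)) (𝓝 (deriv f 0)) := hd.mono_left hle
  have heq : ∀ᶠ s in 𝓝[>] (0:ℝ), slope f 0 s = (s ^ (1/2 : ℝ))⁻¹ := by
    filter_upwards [self_mem_nhdsWithin] with s hs
    have hs : (0:ℝ) < s := hs
    have hpos : (0:ℝ) < s ^ (1/2:ℝ) := Real.rpow_pos_of_pos hs _
    have hsq : s ^ (1/2:ℝ) * s ^ (1/2:ℝ) = s := by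
      rw [← Real.rpow_add hs]; norm_num
    rw [slope_def_field, hf s hs, hf0, sub_zero, sub_zero]
    field_simp
    linear_combination hsq
  have hatTop : Tendsto (slope f 0) (𝓝[>] (0:ℝ)) atTop := by
    rw [tendsto_congr' heq]
    apply Filter.Tendsto.inv_tendsto_nhdsGT_zero
    rw [tendsto_nhdsWithin_iff]
    constructor
    · have hc : ContinuousAt (fun s : ℝ => s ^ (1/2:ℝ)) 0 :=
        Real.continuousAt_rpow_const 0 _ (Or.inr (by norm_num))
      have h2 := hc.tendsto.mono_left (nhdsWithin_le_nhds (s := Set.Ioi (0:ℝ)))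
      simpa [Real.zero_rpow (by norm_num : (1/2:ℝ) ≠ 0)] using h2
    · filter_upwards [self_mem_nhdsWithin] with s hs
      exact Real.rpow_pos_of_pos hs _
  exact not_tendsto_atTop_of_tendsto_nhds hd' hatTop

private lemma one_le_inf : (1 : WithTop ℕ∞) ≤ ((⊤ : ℕ∞) : WithTop ℕ∞) := by
  exact_mod_cast le_top

private lemma key (n : ℕ) :
    (¬ ContDiff ℝ ((⊤ : ℕ∞) : WithTop ℕ∞) (fun t : ℝ => |t| ^ ((n : ℝ) + 1/2))) ∧
    (¬ ContDiff ℝ ((⊤ : ℕ∞) : WithTop ℕ∞) (fun t : ℝ => t * |t| ^ ((n : ℝ) - 1/2))) := by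
  induction n with
  | zero =>
    constructor
    · intro h
      refine not_diffAt_sqrtlike ?_ ?_ ((h.differentiable (by simp)) 0)
      · rw [abs_zero, Real.zero_rpow (by norm_num)]
      · intro s hs
        rw [abs_of_pos hs, show ((0:ℕ):ℝ) + 1/2 = (1/2:ℝ) by norm_num]
    · intro h
      refine not_diffAt_sqrtlike ?_ ?_ ((h.differentiable (by simp)) 0)
      · simp
      · intro s hs
        rw [abs_of_pos hs, show ((0:ℕ):ℝ) - 1/2 = -(1/2:ℝ) by norm_num,
          ← Real.rpow_one_add' hs.le (by norm_num)]
        norm_num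
  | succ n ih =>
    have hβ : (0:ℝ) < (n:ℝ) + 1/2 := by positivity
    have hne : ((n:ℝ) + 1/2) + 1 ≠ 0 := by positivity
    constructor
    · intro h
      have hcast : (fun t : ℝ => |t| ^ (((n+1 : ℕ)) + 1/2 : ℝ))
          = fun t : ℝ => |t| ^ ((((n:ℝ) + 1/2)) + 1) := by
        funext t; congr 1; push_cast; ring
      rw [hcast] at h
      obtain ⟨hdiff, hderiv⟩ := contDiff_infty_iff_deriv.mp h
      have hde : deriv (fun t : ℝ => |t| ^ ((((n:ℝ) + 1/2)) + 1))
          = fun t : ℝ => (((n:ℝ) + 1/2) + 1) * (t * |t| ^ (((n:ℝ) + 1/2) - 1)) :=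
        funext fun t => (hasDerivAt_A hβ t).deriv
      rw [hde] at hderiv
      have hs := hderiv.const_smul ((((n:ℝ) + 1/2) + 1)⁻¹)
      apply ih.2
      have heq2 : (fun t : ℝ => t * |t| ^ ((n:ℝ) - 1/2))
          = (((n:ℝ) + 1/2) + 1)⁻¹ •
            (fun t : ℝ => (((n:ℝ) + 1/2) + 1) * (t * |t| ^ (((n:ℝ) + 1/2) - 1))) := by
        funext t
        simp only [Pi.smul_apply, smul_eq_mul]
        rw [← mul_assoc, inv_mul_cancel₀ hne, one_mul,
          show ((n:ℝ) + 1/2) - 1 = (n:ℝ) - 1/2 by ring]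
      rw [heq2]
      exact hs
    · intro h
      have hcast : (fun t : ℝ => t * |t| ^ (((n+1 : ℕ)) - 1/2 : ℝ))
          = fun t : ℝ => t * |t| ^ ((n:ℝ) + 1/2) := by
        funext t; congr 1; push_cast; ring
      rw [hcast] at h
      obtain ⟨hdiff, hderiv⟩ := contDiff_infty_iff_deriv.mp h
      have hde : deriv (fun t : ℝ => t * |t| ^ ((n:ℝ) + 1/2))
          = fun t : ℝ => (((n:ℝ) + 1/2) + 1) * |t| ^ ((n:ℝ) + 1/2) :=
        funext fun t => (hasDerivAt_B hβ t).deriv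
      rw [hde] at hderiv
      have hs := hderiv.const_smul ((((n:ℝ) + 1/2) + 1)⁻¹)
      apply ih.1
      have heq2 : (fun t : ℝ => |t| ^ ((n:ℝ) + 1/2))
          = (((n:ℝ) + 1/2) + 1)⁻¹ •
            (fun t : ℝ => (((n:ℝ) + 1/2) + 1) * |t| ^ ((n:ℝ) + 1/2)) := by
        funext t
        simp only [Pi.smul_apply, smul_eq_mul]
        rw [← mul_assoc, inv_mul_cancel₀ hne, one_mul]
      rw [heq2]
      exact hs

/-- For every `n ∈ ℕ`, the function `(x,y) ↦ |xy|^{(2n+1)/2}` on `ℂ²` is not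
infinitely differentiable in the real sense. -/
theorem absPow_prod_not_smooth (n : ℕ) :
    ¬ ContDiff ℝ ((⊤ : ℕ∞) : WithTop ℕ∞)
        (fun p : ℂ × ℂ => ‖p.1 * p.2‖ ^ ((2 * (n : ℝ) + 1) / 2)) := by
  intro h
  have hγ : ContDiff ℝ ((⊤ : ℕ∞) : WithTop ℕ∞) (fun t : ℝ => (((t:ℂ), (1:ℂ)) : ℂ × ℂ)) :=
    ContDiff.prodMk Complex.ofRealCLM.contDiff contDiff_const
  have hcomp := h.comp hγ
  have hfun : ((fun p : ℂ × ℂ => ‖p.1 * p.2‖ ^ ((2 * (n : ℝ) + 1) / 2)) ∘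
      fun t : ℝ => (((t:ℂ), (1:ℂ)) : ℂ × ℂ)) = fun t : ℝ => |t| ^ ((n : ℝ) + 1/2) := by
    funext t
    simp only [Function.comp_apply, mul_one, Complex.norm_real, Real.norm_eq_abs]
    rw [show (2 * (n : ℝ) + 1) / 2 = (n : ℝ) + 1/2 by ring]
  rw [hfun] at hcomp
  exact (key n).1 hcomp
end

section
/- Let F(x,y) = Σ_{m,n≥0} a_{m,n} x^m y^n be given by a power series converging absolutely on a polydisc {|x| < R₀, |y| < R₀} with R₀ > 0, and let k, l be positive integers such that a_{m,n} = 0 whenever l·m + k·n < k·l. Define the quasi-homogeneous polynomial G(z,w) := Σ_{(m,n) : l·m + k·n = k·l} a_{m,n} z^m w^n (a finite sum). Then for every R₁ > 1, the functions z ↦ s^{−kl}·F(s^l·z, s^k·z^{−1}) converge uniformly to z ↦ G(z, z^{−1}) on the closed annulus {z ∈ ℂ : 1/R₁ ≤ |z| ≤ R₁} as s → 0 (s ∈ ℂ \ {0}). -/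
open Filter

/-- If the Newton polygon condition `a_{m,n} = 0` for `l·m + k·n < k·l` holds, then
the rescaled functions `z ↦ s^{-kl}·F(s^l·z, s^k·z⁻¹)` converge uniformly, as
`s → 0` with `s ≠ 0`, to `z ↦ G(z, z⁻¹)` on every closed annulus
`{1/R₁ ≤ |z| ≤ R₁}` with `R₁ > 1`, where `G(z,w) = Σ_{l·m + k·n = k·l} a_{m,n} z^m w^n`
collects the monomials of `F` on the Newton segment. -/
theorem rescaled_uniform_convergence_to_newton_part
    (R₀ : ℝ) (hR₀ : 0 < R₀) (a : ℕ → ℕ → ℂ) (F : ℂ → ℂ → ℂ)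
    (hconv : ∀ x y : ℂ, ‖x‖ < R₀ → ‖y‖ < R₀ →
      Summable (fun mn : ℕ × ℕ => ‖a mn.1 mn.2‖ * ‖x‖ ^ mn.1 * ‖y‖ ^ mn.2))
    (hF : ∀ x y : ℂ, ‖x‖ < R₀ → ‖y‖ < R₀ →
      F x y = ∑' mn : ℕ × ℕ, a mn.1 mn.2 * x ^ mn.1 * y ^ mn.2)
    (k l : ℕ) (hk : 0 < k) (hl : 0 < l)
    (hNewton : ∀ m n : ℕ, l * m + k * n < k * l → a m n = 0)
    (R₁ : ℝ) (hR₁ : 1 < R₁) :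
    TendstoUniformlyOn
      (fun (s : ℂ) (z : ℂ) => F (s ^ l * z) (s ^ k * z⁻¹) / s ^ (k * l))
      (fun z : ℂ => ∑ m ∈ Finset.range (k + 1), ∑ n ∈ Finset.range (l + 1),
        (if l * m + k * n = k * l then a m n else 0) * z ^ m * (z⁻¹) ^ n)
      (nhdsWithin 0 {0}ᶜ)
      {z : ℂ | 1 / R₁ ≤ ‖z‖ ∧ ‖z‖ ≤ R₁} := by
  rw [Metric.tendstoUniformlyOn_iff]
  intro ε hε
  have hR₁0 : (0:ℝ) < R₁ := by linarith
  set ρ : ℝ := R₀ / 2 with hρdef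
  have hρ : 0 < ρ := by positivity
  have hρR : ρ < R₀ := by rw [hρdef]; linarith
  have hMsum : Summable (fun mn : ℕ × ℕ => ‖a mn.1 mn.2‖ * ρ ^ mn.1 * ρ ^ mn.2) := by
    have hnρ : ‖(ρ : ℂ)‖ = ρ := by
      rw [Complex.norm_real, Real.norm_eq_abs, abs_of_pos hρ]
    have h := hconv (ρ : ℂ) (ρ : ℂ) (by rw [hnρ]; exact hρR) (by rw [hnρ]; exact hρR)
    simp only [hnρ] at h
    exact h
  set M : ℝ := ∑' mn : ℕ × ℕ, ‖a mn.1 mn.2‖ * ρ ^ mn.1 * ρ ^ mn.2 with hMdef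
  have hM0 : 0 ≤ M := tsum_nonneg (fun mn => by positivity)
  set δ : ℝ := min 1 (ρ / R₁) with hδdef
  have hδ0 : 0 < δ := lt_min one_pos (by positivity)
  have hδ1 : δ ≤ 1 := min_le_left _ _
  have hδρ : δ ≤ ρ / R₁ := min_le_right _ _
  set C : ℝ := δ ^ (k * l + 1) with hCdef
  have hC0 : 0 < C := by positivity
  set q : ℕ := min k l with hqdef
  have hq1 : 1 ≤ q := le_min hk hl
  have hqk : q ≤ k := min_le_left _ _
  have hql : q ≤ l := min_le_right _ _
  have hδq : δ ^ q ≤ ρ / R₁ := by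
    calc δ ^ q ≤ δ ^ 1 := pow_le_pow_of_le_one hδ0.le hδ1 hq1
    _ = δ := pow_one δ
    _ ≤ ρ / R₁ := hδρ
  have hrpos : (0:ℝ) < min δ (ε * C / (M + 1)) := lt_min hδ0 (by positivity)
  filter_upwards [mem_nhdsWithin_of_mem_nhds (Metric.ball_mem_nhds (0:ℂ) hrpos),
    self_mem_nhdsWithin] with s hs hsne
  intro z hz
  rw [mem_ball_zero_iff] at hs
  have hs0 : s ≠ 0 := hsne
  have ht0 : (0:ℝ) < ‖s‖ := norm_pos_iff.mpr hs0
  have htδ : ‖s‖ ≤ δ := le_of_lt (lt_of_lt_of_le hs (min_le_left _ _))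
  have htε : ‖s‖ < ε * C / (M + 1) := lt_of_lt_of_le hs (min_le_right _ _)
  obtain ⟨hz1, hz2⟩ := hz
  have hz0 : z ≠ 0 := by
    intro h
    rw [h, norm_zero] at hz1
    have : (0:ℝ) < 1 / R₁ := by positivity
    linarith
  have hzinv : ‖z⁻¹‖ ≤ R₁ := by
    rw [norm_inv]
    have h1 : R₁⁻¹ ≤ ‖z‖ := by rwa [one_div] at hz1
    have h2 := inv_anti₀ (by positivity : (0:ℝ) < R₁⁻¹) h1
    rwa [inv_inv] at h2
  -- the evaluation points are inside the polydisc
  have hpt : ∀ (j : ℕ) (w : ℂ), q ≤ j → ‖w‖ ≤ R₁ → ‖s ^ j * w‖ < R₀ := by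
    intro j w hj hw
    calc ‖s ^ j * w‖ = ‖s‖ ^ j * ‖w‖ := by rw [norm_mul, norm_pow]
    _ ≤ δ ^ j * R₁ := by
        apply mul_le_mul (pow_le_pow_left₀ ht0.le htδ j) hw (norm_nonneg _)
        positivity
    _ ≤ δ ^ q * R₁ :=
        mul_le_mul_of_nonneg_right (pow_le_pow_of_le_one hδ0.le hδ1 hj) hR₁0.le
    _ ≤ (ρ / R₁) * R₁ := mul_le_mul_of_nonneg_right hδq hR₁0.le
    _ = ρ := div_mul_cancel₀ ρ (ne_of_gt hR₁0)
    _ < R₀ := hρR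
  have hx : ‖s ^ l * z‖ < R₀ := hpt l z hql hz2
  have hy : ‖s ^ k * z⁻¹‖ < R₀ := hpt k z⁻¹ hqk hzinv
  -- the two series
  set f' : ℕ × ℕ → ℂ := fun mn =>
    a mn.1 mn.2 * (s ^ l * z) ^ mn.1 * (s ^ k * z⁻¹) ^ mn.2 / s ^ (k * l) with hf'def
  set g : ℕ × ℕ → ℂ := fun mn =>
    if l * mn.1 + k * mn.2 = k * l then a mn.1 mn.2 * z ^ mn.1 * (z⁻¹) ^ mn.2 else 0 with hgdef
  have hfs : Summable (fun mn : ℕ × ℕ =>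
      a mn.1 mn.2 * (s ^ l * z) ^ mn.1 * (s ^ k * z⁻¹) ^ mn.2) := by
    apply Summable.of_norm
    have h := hconv _ _ hx hy
    simpa [norm_mul, norm_pow] using h
  have hfs' : Summable f' := hfs.div_const _
  set T : Finset (ℕ × ℕ) := Finset.range (k + 1) ×ˢ Finset.range (l + 1) with hTdef
  have hgsupp : ∀ mn : ℕ × ℕ, mn ∉ T → g mn = 0 := by
    rintro ⟨m, n⟩ hmn
    simp only [hgdef]
    split_ifs with h
    · exfalso
      apply hmn
      have h1 : l * m ≤ k * l := Nat.le.intro h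
      have h2 : k * n ≤ k * l := by
        have h3 : k * n ≤ l * m + k * n := Nat.le_add_left _ _
        exact le_trans h3 (le_of_eq h)
      have hm : m ≤ k := by
        apply Nat.le_of_mul_le_mul_left _ hl
        calc l * m ≤ k * l := h1
        _ = l * k := mul_comm k l
      have hn : n ≤ l := Nat.le_of_mul_le_mul_left h2 hk
      simp only [hTdef, Finset.mem_product, Finset.mem_range]
      exact ⟨Nat.lt_succ_of_le hm, Nat.lt_succ_of_le hn⟩
    · rfl
  have hgsum : Summable g := summable_of_ne_finset_zero hgsupp
  have hGz : (∑ m ∈ Finset.range (k + 1), ∑ n ∈ Finset.range (l + 1),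
      (if l * m + k * n = k * l then a m n else 0) * z ^ m * (z⁻¹) ^ n) = ∑' mn, g mn := by
    rw [tsum_eq_sum hgsupp, hTdef, Finset.sum_product]
    apply Finset.sum_congr rfl
    intro m _
    apply Finset.sum_congr rfl
    intro n _
    simp only [hgdef]
    split_ifs <;> simp
  have hFeq : F (s ^ l * z) (s ^ k * z⁻¹) / s ^ (k * l) = ∑' mn, f' mn := by
    rw [hF _ _ hx hy, hf'def, tsum_div_const]
  -- pointwise bound
  have hbound : ∀ mn : ℕ × ℕ, ‖f' mn - g mn‖ ≤
      (‖s‖ / C) * (‖a mn.1 mn.2‖ * ρ ^ mn.1 * ρ ^ mn.2) := by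
    rintro ⟨m, n⟩
    simp only [hf'def, hgdef]
    rcases lt_trichotomy (l * m + k * n) (k * l) with hlt | heq | hgt
    · rw [hNewton m n hlt, if_neg (Nat.ne_of_lt hlt)]
      simp only [zero_mul, zero_div, sub_zero, norm_zero]
      positivity
    · rw [if_pos heq]
      have hcalc : a m n * (s ^ l * z) ^ m * (s ^ k * z⁻¹) ^ n / s ^ (k * l)
          = a m n * z ^ m * (z⁻¹) ^ n := by
        have h1 : a m n * (s ^ l * z) ^ m * (s ^ k * z⁻¹) ^ n / s ^ (k * l)
            = a m n * z ^ m * (z⁻¹) ^ n * (s ^ (l * m + k * n) / s ^ (k * l)) := by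
          rw [pow_add]; ring
        rw [h1, heq, div_self (pow_ne_zero _ hs0), mul_one]
      rw [hcalc, sub_self, norm_zero]
      positivity
    · rw [if_neg (ne_of_gt hgt), sub_zero]
      obtain ⟨e, he⟩ := Nat.exists_eq_add_of_lt hgt
      -- he : l * m + k * n = k * l + e + 1
      have hnorm : ‖a m n * (s ^ l * z) ^ m * (s ^ k * z⁻¹) ^ n / s ^ (k * l)‖
          = ‖a m n‖ * (‖s‖ ^ (l * m + k * n) / ‖s‖ ^ (k * l) * (‖z‖ ^ m * ‖z⁻¹‖ ^ n)) := by
        simp only [norm_div, norm_mul, norm_pow]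
        rw [pow_add]
        ring
      rw [hnorm]
      have hstep : ‖s‖ ^ (l * m + k * n) / ‖s‖ ^ (k * l) = ‖s‖ * ‖s‖ ^ e := by
        have h4 : ‖s‖ ^ (l * m + k * n) = ‖s‖ ^ (k * l) * (‖s‖ * ‖s‖ ^ e) := by
          rw [he]; ring
        rw [h4, mul_div_cancel_left₀ _ (by positivity : (‖s‖:ℝ) ^ (k * l) ≠ 0)]
      have hqmn : q * (m + n) ≤ l * m + k * n := by
        calc q * (m + n) = q * m + q * n := Nat.mul_add q m n
        _ ≤ l * m + k * n :=
            Nat.add_le_add (Nat.mul_le_mul_right m hql) (Nat.mul_le_mul_right n hqk)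
      have hδe : δ ^ e ≤ (ρ / R₁) ^ (m + n) / δ ^ (k * l + 1) := by
        rw [le_div_iff₀ (by positivity : (0:ℝ) < δ ^ (k * l + 1))]
        calc δ ^ e * δ ^ (k * l + 1) = δ ^ (l * m + k * n) := by rw [he]; ring
        _ ≤ δ ^ (q * (m + n)) := pow_le_pow_of_le_one hδ0.le hδ1 hqmn
        _ = (δ ^ q) ^ (m + n) := by rw [← pow_mul]
        _ ≤ (ρ / R₁) ^ (m + n) := pow_le_pow_left₀ (by positivity) hδq _
      have h3 : (ρ / R₁) ^ (m + n) * R₁ ^ (m + n) = ρ ^ m * ρ ^ n := by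
        rw [← mul_pow, div_mul_cancel₀ ρ (ne_of_gt hR₁0), pow_add]
      have key : ‖s‖ ^ (l * m + k * n) / ‖s‖ ^ (k * l) * (‖z‖ ^ m * ‖z⁻¹‖ ^ n)
          ≤ ‖s‖ / C * (ρ ^ m * ρ ^ n) := by
        rw [hstep]
        calc ‖s‖ * ‖s‖ ^ e * (‖z‖ ^ m * ‖z⁻¹‖ ^ n)
            ≤ ‖s‖ * δ ^ e * (R₁ ^ m * R₁ ^ n) := by
              apply mul_le_mul
              · exact mul_le_mul_of_nonneg_left (pow_le_pow_left₀ ht0.le htδ e) ht0.le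
              · apply mul_le_mul (pow_le_pow_left₀ (norm_nonneg _) hz2 m)
                  (pow_le_pow_left₀ (norm_nonneg _) hzinv n) (by positivity) (by positivity)
              · positivity
              · positivity
        _ ≤ ‖s‖ * ((ρ / R₁) ^ (m + n) / δ ^ (k * l + 1)) * (R₁ ^ m * R₁ ^ n) :=
              mul_le_mul_of_nonneg_right (mul_le_mul_of_nonneg_left hδe ht0.le)
                (by positivity)
        _ = ‖s‖ / δ ^ (k * l + 1) * ((ρ / R₁) ^ (m + n) * R₁ ^ (m + n)) := by
              rw [pow_add R₁]; ring
        _ = ‖s‖ / C * (ρ ^ m * ρ ^ n) := by rw [h3, hCdef]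
      calc ‖a m n‖ * (‖s‖ ^ (l * m + k * n) / ‖s‖ ^ (k * l) * (‖z‖ ^ m * ‖z⁻¹‖ ^ n))
          ≤ ‖a m n‖ * (‖s‖ / C * (ρ ^ m * ρ ^ n)) :=
            mul_le_mul_of_nonneg_left key (norm_nonneg _)
      _ = ‖s‖ / C * (‖a m n‖ * ρ ^ m * ρ ^ n) := by ring
  -- assemble
  have hdom : Summable (fun mn : ℕ × ℕ =>
      (‖s‖ / C) * (‖a mn.1 mn.2‖ * ρ ^ mn.1 * ρ ^ mn.2)) := hMsum.mul_left _
  have hsum_norm : Summable (fun mn => ‖f' mn - g mn‖) :=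
    Summable.of_nonneg_of_le (fun _ => norm_nonneg _) hbound hdom
  have hM1 : (0:ℝ) < M + 1 := by linarith
  have hεC : ‖s‖ * (M + 1) < ε * C := (lt_div_iff₀ hM1).mp htε
  calc dist (∑ m ∈ Finset.range (k + 1), ∑ n ∈ Finset.range (l + 1),
        (if l * m + k * n = k * l then a m n else 0) * z ^ m * (z⁻¹) ^ n)
        (F (s ^ l * z) (s ^ k * z⁻¹) / s ^ (k * l))
      = ‖(∑' mn, f' mn) - ∑' mn, g mn‖ := by
        rw [dist_eq_norm, hGz, hFeq, norm_sub_rev]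
  _ = ‖∑' mn, (f' mn - g mn)‖ := by rw [Summable.tsum_sub hfs' hgsum]
  _ ≤ ∑' mn, ‖f' mn - g mn‖ := norm_tsum_le_tsum_norm hsum_norm
  _ ≤ ∑' mn : ℕ × ℕ, (‖s‖ / C) * (‖a mn.1 mn.2‖ * ρ ^ mn.1 * ρ ^ mn.2) :=
        Summable.tsum_le_tsum hbound hsum_norm hdom
  _ = (‖s‖ / C) * M := by rw [hMdef, tsum_mul_left]
  _ < ε := by
        rw [div_mul_eq_mul_div, div_lt_iff₀ hC0]
        nlinarith [ht0]
end

section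
/- Let k, l be positive integers and let (a_{m,n})_{(m,n) ∈ ℕ², l·m + k·n = k·l} be complex numbers with a_{k,0} ≠ 0 and a_{0,l} ≠ 0. Define the polynomial H(z) := Σ_{(m,n) : l·m + k·n = k·l} a_{m,n}·z^{l + m − n} ∈ ℂ[z] (so that H(z) = z^l·G(z, 1/z) for the quasi-homogeneous polynomial G(z,w) = Σ a_{m,n} z^m w^n). Then every root of H in ℂ has multiplicity at most max(k, l). -/
open Polynomial

lemma aux_rootMultiplicity_pow {p : ℂ[X]} (hp : p ≠ 0) (x : ℂ) (n : ℕ) :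
    rootMultiplicity x (p ^ n) = n * rootMultiplicity x p := by
  induction n with
  | zero =>
      have h1 : rootMultiplicity x (1 : ℂ[X]) = 0 :=
        Polynomial.rootMultiplicity_eq_zero (by simp [Polynomial.IsRoot])
      simp [h1]
  | succ n ih =>
      rw [pow_succ, Polynomial.rootMultiplicity_mul (mul_ne_zero (pow_ne_zero _ hp) hp), ih]
      ring

lemma aux_comp_finset_sum {ι : Type*} (F : Finset ι) (f : ι → ℂ[X]) (q : ℂ[X]) :
    (∑ i ∈ F, f i).comp q = ∑ i ∈ F, (f i).comp q := by
  simp [Polynomial.comp, Polynomial.eval₂_finset_sum]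

/-- Let `k, l ≥ 1` and let `(a_{m,n})` be complex numbers indexed by the lattice
points of the segment `l·m + k·n = k·l`, with `a_{k,0} ≠ 0` and `a_{0,l} ≠ 0`.
Then every root of the polynomial `H(z) = Σ_{l·m + k·n = k·l} a_{m,n}·z^{l+m-n}`
(so that `H(z) = z^l·G(z,1/z)` for `G(z,w) = Σ a_{m,n} z^m w^n`) has multiplicity
at most `max(k,l)`. -/
theorem rootMultiplicity_newton_segment_le (k l : ℕ) (hk : 0 < k) (hl : 0 < l)
    (a : ℕ → ℕ → ℂ) (hak : a k 0 ≠ 0) (hal : a 0 l ≠ 0) :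
    ∀ z : ℂ,
      Polynomial.rootMultiplicity z
        (∑ m ∈ Finset.range (k + 1), ∑ n ∈ Finset.range (l + 1),
          if l * m + k * n = k * l then C (a m n) * X ^ (l + m - n) else 0)
      ≤ max k l := by
  intro z
  set d := Nat.gcd k l with hd
  have hd0 : 0 < d := Nat.gcd_pos_of_pos_left l hk
  set k' := k / d with hk'
  set l' := l / d with hl'
  have hkd : k' * d = k := Nat.div_mul_cancel (Nat.gcd_dvd_left k l)
  have hld : l' * d = l := Nat.div_mul_cancel (Nat.gcd_dvd_right k l)
  have hcop : Nat.Coprime k' l' := Nat.coprime_div_gcd_div_gcd hd0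
  have hk'0 : 0 < k' := Nat.div_pos (Nat.le_of_dvd hk (Nat.gcd_dvd_left k l)) hd0
  have hl'0 : 0 < l' := Nat.div_pos (Nat.le_of_dvd hl (Nat.gcd_dvd_right k l)) hd0
  set b : ℕ → ℂ := fun t => a (k' * t) (l' * (d - t)) with hb
  set s := k' + l' with hs
  have hs0 : 0 < s := by omega
  -- Step 1: reindex the double sum as a single sum over t ∈ range (d+1)
  have hsum : (∑ m ∈ Finset.range (k + 1), ∑ n ∈ Finset.range (l + 1),
      if l * m + k * n = k * l then C (a m n) * X ^ (l + m - n) else 0)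
      = ∑ t ∈ Finset.range (d + 1), C (b t) * X ^ (s * t) := by
    rw [← Finset.sum_product', ← Finset.sum_filter]
    refine (Finset.sum_nbij' (fun t => (k' * t, l' * (d - t))) (fun p => p.1 / k')
      ?_ ?_ ?_ ?_ ?_).symm
    · -- maps range (d+1) into filter
      intro t ht
      simp only [Finset.mem_range] at ht
      have htd : t ≤ d := by omega
      simp only [Finset.mem_filter, Finset.mem_product, Finset.mem_range]
      refine ⟨⟨?_, ?_⟩, ?_⟩
      · have : k' * t ≤ k' * d := Nat.mul_le_mul_left _ htd
        omega
      · have : l' * (d - t) ≤ l' * d := Nat.mul_le_mul_left _ (by omega)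
        omega
      · have hu : t + (d - t) = d := by omega
        calc l * (k' * t) + k * (l' * (d - t))
            = (l' * d) * (k' * t) + (k' * d) * (l' * (d - t)) := by rw [hkd, hld]
          _ = (k' * l' * d) * (t + (d - t)) := by ring
          _ = (k' * d) * (l' * d) := by rw [hu]; ring
          _ = k * l := by rw [hkd, hld]
    · -- maps filter into range (d+1)
      rintro ⟨m, n⟩ hp
      simp only [Finset.mem_filter, Finset.mem_product, Finset.mem_range] at hp
      obtain ⟨⟨hm, hn⟩, hcond⟩ := hp
      simp only [Finset.mem_range]
      have h1 : m ≤ k := by omega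
      have h2 := Nat.div_le_div_right (c := k') h1
      rw [← hkd, Nat.mul_div_cancel_left d hk'0] at h2
      omega
    · -- left inverse on range (d+1)
      intro t ht
      exact Nat.mul_div_cancel_left t hk'0
    · -- right inverse on the filter
      rintro ⟨m, n⟩ hp
      simp only [Finset.mem_filter, Finset.mem_product, Finset.mem_range] at hp
      obtain ⟨⟨hm, hn⟩, hcond⟩ := hp
      have hcond' : l' * m + k' * n = k' * (l' * d) := by
        refine Nat.eq_of_mul_eq_mul_left hd0 ?_
        calc d * (l' * m + k' * n) = (l' * d) * m + (k' * d) * n := by ring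
          _ = l * m + k * n := by rw [hkd, hld]
          _ = k * l := hcond
          _ = (k' * d) * (l' * d) := by rw [hkd, hld]
          _ = d * (k' * (l' * d)) := by ring
      have h2 : l' * m = k' * (l' * d) - k' * n := Nat.eq_sub_of_add_eq' (by omega)
      have hdvd : k' ∣ m := by
        have : k' ∣ l' * m := h2 ▸ Nat.dvd_sub (Dvd.intro _ rfl) (Dvd.intro _ rfl)
        exact hcop.dvd_of_dvd_mul_left this
      obtain ⟨t, rfl⟩ := hdvd
      have htd : t ≤ d := by
        have h3 : k' * t ≤ k' * d := by omega
        exact Nat.le_of_mul_le_mul_left h3 hk'0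
      have h4 : l' * t + n = l' * d := by
        refine Nat.eq_of_mul_eq_mul_left hk'0 ?_
        calc k' * (l' * t + n) = l' * (k' * t) + k' * n := by ring
          _ = k' * (l' * d) := hcond'
      have h5 : n = l' * (d - t) := by
        rw [Nat.mul_sub]
        omega
      dsimp only
      rw [Nat.mul_div_cancel_left t hk'0, ← h5]
    · -- values agree
      intro t ht
      simp only [Finset.mem_range] at ht
      have htd : t ≤ d := by omega
      congr 1
      have e1 : l + k' * t = l' * (d - t) + (l' * t + k' * t) := by
        rw [← hld]
        rw [Nat.mul_sub]
        have : l' * t ≤ l' * d := Nat.mul_le_mul_left _ htd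
        omega
      rw [e1, Nat.add_sub_cancel_left, hs]
      ring
  rw [hsum]
  -- Step 2: the single sum is P.comp (X^s)
  set P : ℂ[X] := ∑ t ∈ Finset.range (d + 1), C (b t) * X ^ t with hP
  have hcomp : (∑ t ∈ Finset.range (d + 1), C (b t) * X ^ (s * t)) = P.comp (X ^ s) := by
    rw [hP, aux_comp_finset_sum]
    refine Finset.sum_congr rfl fun t _ => ?_
    rw [Polynomial.mul_comp, Polynomial.C_comp, Polynomial.X_pow_comp, ← pow_mul]
  rw [hcomp]
  have hPeval0 : P.eval 0 = a 0 l := by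
    rw [hP, Polynomial.eval_finset_sum]
    rw [Finset.sum_eq_single 0]
    · simp [hb, hld]
    · intro t _ ht
      simp [zero_pow ht]
    · simp
  have hPne : P ≠ 0 := by
    intro h
    rw [h] at hPeval0
    simp at hPeval0
    exact hal hPeval0.symm
  have hPdeg : P.natDegree ≤ d := by
    apply Polynomial.natDegree_sum_le_of_forall_le
    intro t ht
    refine le_trans (Polynomial.natDegree_C_mul_le _ _) ?_
    rw [Polynomial.natDegree_X_pow]
    exact Nat.lt_succ_iff.mp (Finset.mem_range.mp ht)
  -- factor out the root z^s from P
  set e := rootMultiplicity (z ^ s) P with he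
  set Q := P /ₘ ((X - C (z ^ s)) ^ e) with hQ
  have hform : P = (X - C (z ^ s)) ^ e * Q :=
    (Polynomial.pow_mul_divByMonic_rootMultiplicity_eq P (z ^ s)).symm
  have hQz : Q.eval (z ^ s) ≠ 0 :=
    Polynomial.eval_divByMonic_pow_rootMultiplicity_ne_zero (z ^ s) hPne
  have hHeq : P.comp (X ^ s) = ((X : ℂ[X]) ^ s - C (z ^ s)) ^ e * Q.comp (X ^ s) := by
    conv_lhs => rw [hform]
    rw [Polynomial.mul_comp, Polynomial.pow_comp, Polynomial.sub_comp, Polynomial.X_comp,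
      Polynomial.C_comp]
  have hHne : P.comp (X ^ s) ≠ 0 := by
    intro h
    have h0 : (P.comp (X ^ s)).eval 0 = 0 := by rw [h]; simp
    rw [Polynomial.eval_comp] at h0
    simp only [Polynomial.eval_pow, Polynomial.eval_X, zero_pow hs0.ne'] at h0
    rw [hPeval0] at h0
    exact hal h0
  have he_le : e ≤ d := by
    have h1 : ((X : ℂ[X]) - C (z ^ s)) ^ e ∣ P := Polynomial.pow_rootMultiplicity_dvd P (z ^ s)
    have h2 := Polynomial.natDegree_le_of_dvd h1 hPne
    rw [Polynomial.natDegree_pow, Polynomial.natDegree_X_sub_C, mul_one] at h2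
    omega
  rw [hHeq]
  have hne' : ((X : ℂ[X]) ^ s - C (z ^ s)) ^ e * Q.comp (X ^ s) ≠ 0 := hHeq ▸ hHne
  rw [Polynomial.rootMultiplicity_mul hne']
  have hQ0 : rootMultiplicity z (Q.comp (X ^ s)) = 0 := by
    apply Polynomial.rootMultiplicity_eq_zero
    simp only [Polynomial.IsRoot, Polynomial.eval_comp, Polynomial.eval_pow, Polynomial.eval_X]
    exact hQz
  have hbase : ((X : ℂ[X]) ^ s - C (z ^ s)) ≠ 0 := Polynomial.X_pow_sub_C_ne_zero hs0 _
  rw [hQ0, Nat.add_zero, aux_rootMultiplicity_pow hbase]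
  have hdk : d ≤ max k l := le_trans (Nat.gcd_le_left l hk) (le_max_left k l)
  by_cases hz : z = 0
  · subst hz
    have he0 : e = 0 := by
      rw [he]
      apply Polynomial.rootMultiplicity_eq_zero
      simp only [Polynomial.IsRoot, zero_pow hs0.ne', hPeval0]
      exact hal
    simp [he0]
  · have hm1 : rootMultiplicity z ((X : ℂ[X]) ^ s - C (z ^ s)) ≤ 1 := by
      have hder : rootMultiplicity z (derivative ((X : ℂ[X]) ^ s - C (z ^ s))) = 0 := by
        apply Polynomial.rootMultiplicity_eq_zero
        simp only [Polynomial.derivative_sub, Polynomial.derivative_X_pow,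
          Polynomial.derivative_C, sub_zero, Polynomial.IsRoot, Polynomial.eval_mul,
          Polynomial.eval_pow, Polynomial.eval_X, Polynomial.eval_C, Polynomial.eval_natCast]
        intro hcontra
        rcases mul_eq_zero.mp hcontra with h | h
        · exact Nat.cast_ne_zero.mpr hs0.ne' h
        · exact pow_ne_zero _ hz h
      have := Polynomial.rootMultiplicity_sub_one_le_derivative_rootMultiplicity
        ((X : ℂ[X]) ^ s - C (z ^ s)) z
      omega
    calc e * rootMultiplicity z ((X : ℂ[X]) ^ s - C (z ^ s)) ≤ e * 1 :=
          Nat.mul_le_mul_left _ hm1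
      _ = e := Nat.mul_one e
      _ ≤ d := he_le
      _ ≤ max k l := hdk
end
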